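/- arXiv:2402.01949 — 6 statements merged into one kernel-verified Lean document; each statement's English description precedes it below -/
import Mathlib

section
/- Let (X, ρ) be a metric space, and let {A_n} and A be closed subsets of X such that the Hausdorff distance δ_H(A_n, A) is finite for each n and tends to 0 as n → ∞. If X is separable, then there exists a sequence of Borel measurable maps I_n : A_n → A such that sup_{x ∈ A_n} ρ(I_n(x), x) → 0 as n → ∞. -/
open Metric MeasureTheory Filter Topology

/-- If `(X, ρ)` is a separable metric space and `A n`, `A` are closed
subsets with finite Hausdorff distance tending to `0`, then there are Borel measurable
maps `ι n : A n → A` with `sup_{x ∈ A n} ρ(ι n x, x) → 0`. -/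
theorem exists_borel_maps_of_hausdorff_tendsto
    {X : Type*} [MetricSpace X] [TopologicalSpace.SeparableSpace X]
    [MeasurableSpace X] [BorelSpace X]
    (A : ℕ → Set X) (Alim : Set X)
    (hA : ∀ n, IsClosed (A n)) (hAlim : IsClosed Alim)
    (hfin : ∀ n, EMetric.hausdorffEdist (A n) Alim ≠ ⊤)
    (htend : Tendsto (fun n => Metric.hausdorffDist (A n) Alim) atTop (𝓝 0)) :
    ∃ ι : ℕ → X → X,
      (∀ n, Set.MapsTo (ι n) (A n) Alim) ∧
      (∀ n, Measurable ((A n).restrict (ι n))) ∧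
      (∀ ε : ℝ, 0 < ε → ∃ N : ℕ, ∀ n ≥ N, ∀ x ∈ A n, dist (ι n x) x < ε) := by
  classical
  rcases Alim.eq_empty_or_nonempty with hemp | ⟨z0, hz0⟩
  · -- All `A n` are empty
    have hAe : ∀ n, A n = ∅ := by
      intro n
      rcases (A n).eq_empty_or_nonempty with h | h
      · exact h
      · exfalso
        have := EMetric.nonempty_of_hausdorffEdist_ne_top h (hfin n)
        rw [hemp] at this
        exact this.ne_empty rfl
    refine ⟨fun n x => x, ?_, ?_, ?_⟩
    · intro n x hx; rw [hAe n] at hx; exact absurd hx (Set.notMem_empty x)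
    · intro n; exact measurable_subtype_coe
    · intro ε hε
      exact ⟨0, fun n _ x hx => by rw [hAe n] at hx; exact absurd hx (Set.notMem_empty x)⟩
  · haveI : Nonempty ↥Alim := ⟨⟨z0, hz0⟩⟩
    haveI : SecondCountableTopology X := UniformSpace.secondCountable_of_separable X
    haveI : TopologicalSpace.SeparableSpace ↥Alim :=
      TopologicalSpace.SecondCountableTopology.to_separableSpace
    obtain ⟨u, hu⟩ := TopologicalSpace.exists_dense_seq ↥Alim
    set y : ℕ → X := fun k => (u k : X) with hy
    have hyA : ∀ k, y k ∈ Alim := fun k => (u k).2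
    set r : ℕ → ℝ := fun n => Metric.hausdorffDist (A n) Alim + 1 / (n + 1) with hr
    have hhalf : ∀ n : ℕ, 0 < 1 / (2 * ((n : ℝ) + 1)) := by
      intro n; positivity
    have hex : ∀ n, ∀ x ∈ A n, ∃ k, dist x (y k) < r n := by
      intro n x hx
      have h2 : Metric.hausdorffDist (A n) Alim
          < Metric.hausdorffDist (A n) Alim + 1 / (2 * ((n : ℝ) + 1)) :=
        lt_add_of_pos_right _ (hhalf n)
      obtain ⟨z, hz, hzd⟩ := Metric.exists_dist_lt_of_hausdorffDist_lt hx h2 (hfin n)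
      obtain ⟨k, hk⟩ := hu.exists_dist_lt (⟨z, hz⟩ : ↥Alim) (hhalf n)
      have hk' : dist z (y k) < 1 / (2 * ((n : ℝ) + 1)) := by
        rwa [Subtype.dist_eq] at hk
      refine ⟨k, ?_⟩
      calc dist x (y k) ≤ dist x z + dist z (y k) := dist_triangle _ _ _
        _ < (Metric.hausdorffDist (A n) Alim + 1 / (2 * ((n : ℝ) + 1)))
            + 1 / (2 * ((n : ℝ) + 1)) := add_lt_add hzd hk'
        _ = r n := by rw [hr]; field_simp; ring
    set f : ℕ → X → ℕ := fun n x =>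
      if h : ∃ k, dist x (y k) < r n then Nat.find h else 0 with hf
    set ι : ℕ → X → X := fun n x => y (f n x) with hι
    have hmaps : ∀ n, Set.MapsTo (ι n) (A n) Alim := fun n x _ => hyA _
    have hfmeas : ∀ n, Measurable (f n) := by
      intro n
      apply measurable_to_countable'
      intro j
      have heq : f n ⁻¹' {j} =
          (Metric.ball (y j) (r n) ∩ ⋂ i ∈ Finset.range j, (Metric.ball (y i) (r n))ᶜ)
            ∪ (if j = 0 then (⋃ k, Metric.ball (y k) (r n))ᶜ else ∅) := by
        have hEc : ∀ x : X, x ∈ (⋃ k, Metric.ball (y k) (r n))ᶜ ↔ ¬∃ k, dist x (y k) < r n := by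
          intro x
          simp [Metric.mem_ball]
        ext x
        simp only [Set.mem_preimage, Set.mem_singleton_iff, Set.mem_union, Set.mem_inter_iff,
          Set.mem_iInter, Set.mem_compl_iff, Metric.mem_ball, Finset.mem_range, hf]
        by_cases h : ∃ k, dist x (y k) < r n
        · rw [dif_pos h, Nat.find_eq_iff h]
          constructor
          · rintro ⟨h1, h2⟩
            exact Or.inl ⟨h1, h2⟩
          · rintro (⟨h1, h2⟩ | h2)
            · exact ⟨h1, h2⟩
            · exfalso
              by_cases hj : j = 0
              · rw [if_pos hj] at h2
                exact (hEc x).mp h2 h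
              · rw [if_neg hj] at h2
                exact (Set.notMem_empty x) h2
        · rw [dif_neg h]
          constructor
          · intro hj
            subst hj
            right
            rw [if_pos rfl]
            exact (hEc x).mpr h
          · rintro (⟨h1, _⟩ | h2)
            · exact absurd ⟨j, h1⟩ h
            · by_cases hj : j = 0
              · exact hj.symm
              · rw [if_neg hj] at h2
                exact absurd h2 (Set.notMem_empty x)
      rw [heq]
      apply MeasurableSet.union
      · exact (Metric.isOpen_ball.measurableSet).inter
          (MeasurableSet.biInter (Set.to_countable _)
            (fun i _ => Metric.isOpen_ball.measurableSet.compl))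
      · split
        · exact (MeasurableSet.iUnion (fun k => Metric.isOpen_ball.measurableSet)).compl
        · exact MeasurableSet.empty
    have hmeas : ∀ n, Measurable ((A n).restrict (ι n)) := by
      intro n
      have : Measurable (ι n) := Measurable.comp (g := y) (f := f n) measurable_from_top (hfmeas n)
      exact this.comp measurable_subtype_coe
    refine ⟨ι, hmaps, hmeas, ?_⟩
    intro ε hε
    have h2 : Tendsto r atTop (𝓝 0) := by
      rw [hr]
      have : Tendsto (fun n : ℕ => 1 / ((n : ℝ) + 1)) atTop (𝓝 0) :=
        tendsto_one_div_add_atTop_nhds_zero_nat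
      simpa using htend.add this
    obtain ⟨N, hN⟩ := (Metric.tendsto_atTop.mp h2) ε hε
    refine ⟨N, fun n hn x hx => ?_⟩
    have hrn : r n < ε := by
      have := hN n hn
      rw [Real.dist_eq, sub_zero] at this
      calc r n ≤ |r n| := le_abs_self _
        _ < ε := this
    have hx' := hex n x hx
    have : dist x (ι n x) < r n := by
      rw [hι, hf]
      simp only
      rw [dif_pos hx']
      exact Nat.find_spec hx'
    rw [dist_comm]
    exact lt_trans this hrn
end

section
/- Let (X, ρ) be a locally compact separable metric space, {A_n} and A closed subsets with δ_H(A_n, A) → 0, μ_n Radon measures on A_n converging weakly to a Radon measure μ on A (as measures on X), and I_n : A_n → A Borel maps with sup_{x∈A_n} ρ(I_n(x), x) → 0. Then the pushforward measures μ_n ∘ I_n^{-1} converge weakly to μ on A. In particular, for every f ∈ C_c(A), the L²(A_n; μ_n)-norm of f ∘ I_n converges to the L²(A; μ)-norm of f. -/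
open Metric MeasureTheory Filter Topology

private lemma key_convergence
    {X : Type*} [MetricSpace X] [TopologicalSpace.SeparableSpace X] [LocallyCompactSpace X]
    [MeasurableSpace X] [BorelSpace X]
    (A : ℕ → Set X) (Alim : Set X)
    (hA : ∀ n, IsClosed (A n)) (hAlim : IsClosed Alim)
    (μ : ℕ → Measure X) (μlim : Measure X)
    [∀ n, (μ n).Regular] [μlim.Regular]
    (hsupp : ∀ n, μ n ((A n)ᶜ) = 0) (hsuppl : μlim (Alimᶜ) = 0)
    (hweak : ∀ f : X → ℝ, Continuous f → HasCompactSupport f →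
      Tendsto (fun n => ∫ x, f x ∂(μ n)) atTop (𝓝 (∫ x, f x ∂μlim)))
    (ι : ℕ → X → X)
    (hιmaps : ∀ n, Set.MapsTo (ι n) (A n) Alim)
    (hιmeas : ∀ n, Measurable ((A n).restrict (ι n)))
    (hιdist : ∀ ε : ℝ, 0 < ε → ∃ N : ℕ, ∀ n ≥ N, ∀ x ∈ A n, dist (ι n x) x < ε)
    (f : X → ℝ) (hf : ContinuousOn f Alim)
    (hKc : IsCompact (closure {x ∈ Alim | f x ≠ 0})) :
    Tendsto (fun n => ∫ x, f (ι n x) ∂(μ n)) atTop (𝓝 (∫ x, f x ∂μlim)) := by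
  classical
  set S : Set X := closure {x ∈ Alim | f x ≠ 0} with hS_def
  have hS_sub : S ⊆ Alim := closure_minimal (Set.sep_subset _ _) hAlim
  -- Tietze extension of `f` from the closed set `Alim`
  obtain ⟨F, hF⟩ := ContinuousMap.exists_restrict_eq (Y := ℝ) hAlim ⟨Alim.restrict f, hf.restrict⟩
  have hFf : ∀ x ∈ Alim, F x = f x := by
    intro x hx
    have := congrFun (congrArg ContinuousMap.toFun hF) ⟨x, hx⟩
    exact this
  -- cutoff function
  obtain ⟨χ, hχ1, -, hχcs, hχmem⟩ :=
    exists_continuous_one_zero_of_isCompact hKc isClosed_empty (Set.disjoint_empty _)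
  set g : X → ℝ := fun x => χ x * F x with hg_def
  have hg_cont : Continuous g := χ.continuous.mul F.continuous
  have hg_supp : HasCompactSupport g := hχcs.mul_right
  have hgf : ∀ x ∈ Alim, g x = f x := by
    intro x hx
    by_cases hxS : x ∈ S
    · have : χ x = 1 := hχ1 hxS
      simp [hg_def, this, hFf x hx]
    · have hfx : f x = 0 := by
        by_contra h
        exact hxS (subset_closure ⟨hx, h⟩)
      simp [hg_def, hFf x hx, hfx]
  -- almost everywhere membership
  have hms : ∀ n, MeasurableSet (A n) := fun n => (hA n).measurableSet
  have haen : ∀ n, ∀ᵐ x ∂(μ n), x ∈ A n := fun n => by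
    rw [MeasureTheory.ae_iff]
    exact hsupp n
  have haelim : ∀ᵐ x ∂μlim, x ∈ Alim := by
    rw [MeasureTheory.ae_iff]
    exact hsuppl
  -- replace `f` by `g` in all integrals
  have h1 : (fun n => ∫ x, f (ι n x) ∂(μ n)) = fun n => ∫ x, g (ι n x) ∂(μ n) := by
    funext n
    exact integral_congr_ae ((haen n).mono fun x hx => (hgf _ (hιmaps n hx)).symm)
  have h2 : ∫ x, f x ∂μlim = ∫ x, g x ∂μlim :=
    integral_congr_ae (haelim.mono fun x hx => (hgf _ hx).symm)
  rw [h1, h2]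
  -- setup for the main estimate
  obtain ⟨K', hK'comp, hK'sub⟩ := exists_compact_superset hg_supp
  obtain ⟨δ₀, hδ₀pos, hδ₀⟩ := hg_supp.exists_cthickening_subset_open isOpen_interior hK'sub
  obtain ⟨χ₂, hχ₂1, -, hχ₂cs, hχ₂mem⟩ :=
    exists_continuous_one_zero_of_isCompact hK'comp isClosed_empty (Set.disjoint_empty _)
  set M : ℝ := ∫ x, χ₂ x ∂μlim with hM_def
  have hM0 : 0 ≤ M := integral_nonneg fun x => (hχ₂mem x).1
  have hχ₂tend := hweak χ₂ χ₂.continuous hχ₂cs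
  have hχ₂int : ∀ ν : Measure X, ν.Regular → Integrable (fun x => χ₂ x) ν := fun ν hν =>
    χ₂.continuous.integrable_of_hasCompactSupport hχ₂cs
  obtain ⟨C₀, hC₀⟩ := hg_cont.bounded_above_of_compact_support hg_supp
  set C : ℝ := max C₀ 0 with hC_def
  have hC : ∀ x, ‖g x‖ ≤ C := fun x => (hC₀ x).trans (le_max_left _ _)
  have hC0 : 0 ≤ C := le_max_right _ _
  -- main step: the difference tends to zero
  have hdiff : Tendsto (fun n => (∫ x, g (ι n x) ∂(μ n)) - ∫ x, g x ∂(μ n)) atTop (𝓝 0) := by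
    rw [NormedAddCommGroup.tendsto_nhds_zero]
    intro ε hε
    have hM1 : (0:ℝ) < M + 1 := by linarith
    set ε' : ℝ := ε / (2 * (M + 1)) with hε'_def
    have hε'pos : 0 < ε' := by positivity
    have hgu : UniformContinuous g := hg_supp.uniformContinuous_of_continuous hg_cont
    obtain ⟨δ, hδpos, hδ⟩ := Metric.uniformContinuous_iff.mp hgu ε' hε'pos
    obtain ⟨N₁, hN₁⟩ := hιdist (min δ δ₀) (lt_min hδpos hδ₀pos)
    have hev : ∀ᶠ n in atTop, ∫ x, χ₂ x ∂(μ n) < M + 1 :=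
      hχ₂tend.eventually_lt_const (by linarith)
    filter_upwards [eventually_ge_atTop N₁, hev] with n hn hn2
    -- the key pointwise facts on `A n`
    have hKmem : ∀ x ∈ A n, ι n x ∈ tsupport g → x ∈ K' := by
      intro x hx hxg
      have hd : dist x (ι n x) ≤ δ₀ := by
        rw [dist_comm]
        exact le_of_lt (lt_of_lt_of_le (hN₁ n hn x hx) (min_le_right _ _))
      exact interior_subset (hδ₀ (mem_cthickening_of_dist_le x (ι n x) δ₀ _ hxg hd))
    have hpt : ∀ x ∈ A n, ‖g (ι n x) - g x‖ ≤ ε' * χ₂ x := by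
      intro x hx
      by_cases hxK : x ∈ K'
      · have hdist : dist (ι n x) x < δ := lt_of_lt_of_le (hN₁ n hn x hx) (min_le_left _ _)
        have := hδ hdist
        rw [Real.dist_eq] at this
        have hχx : χ₂ x = 1 := hχ₂1 hxK
        rw [hχx, mul_one]
        exact le_of_lt this
      · have hgx : g x = 0 := by
          apply image_eq_zero_of_notMem_tsupport
          intro h
          exact hxK (interior_subset (hK'sub h))
        have hgι : g (ι n x) = 0 := by
          apply image_eq_zero_of_notMem_tsupport
          intro h
          exact hxK (hKmem x hx h)
        rw [hgx, hgι, sub_zero, norm_zero]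
        exact mul_nonneg hε'pos.le (hχ₂mem x).1
    -- measurability and integrability of `g ∘ ι n`
    have hpw : Measurable ((A n).piecewise (fun x => g (ι n x)) 0) := by
      apply measurable_of_restrict_of_restrict_compl (hms n)
      · have : (A n).restrict ((A n).piecewise (fun x => g (ι n x)) 0)
            = fun x : A n => g ((A n).restrict (ι n) x) := by
          funext x
          exact Set.piecewise_eq_of_mem (A n) (fun x => g (ι n x)) 0 x.2
        rw [show (A n).domRestrict ((A n).piecewise (fun x => g (ι n x)) 0) = _ from this]
        exact hg_cont.measurable.comp (hιmeas n)
      · have : ((A n)ᶜ).restrict ((A n).piecewise (fun x => g (ι n x)) 0)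
            = fun _ => (0:ℝ) := by
          funext x
          exact Set.piecewise_eq_of_notMem (A n) (fun x => g (ι n x)) 0 x.2
        rw [show ((A n)ᶜ).domRestrict ((A n).piecewise (fun x => g (ι n x)) 0) = _ from this]
        exact measurable_const
    have haesm : AEStronglyMeasurable (fun x => g (ι n x)) (μ n) :=
      hpw.aestronglyMeasurable.congr
        ((haen n).mono fun x hx => Set.piecewise_eq_of_mem _ _ _ hx)
    have hbound : ∀ᵐ x ∂(μ n), ‖g (ι n x)‖ ≤ C * χ₂ x := by
      filter_upwards [haen n] with x hx
      by_cases hxg : ι n x ∈ tsupport g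
      · have : χ₂ x = 1 := hχ₂1 (hKmem x hx hxg)
        rw [this, mul_one]
        exact hC _
      · rw [image_eq_zero_of_notMem_tsupport hxg, norm_zero]
        exact mul_nonneg hC0 (hχ₂mem x).1
    have hintχ : Integrable (fun x => χ₂ x) (μ n) := hχ₂int (μ n) inferInstance
    have hint1 : Integrable (fun x => g (ι n x)) (μ n) :=
      Integrable.mono' (hintχ.const_mul C) haesm hbound
    have hint2 : Integrable g (μ n) := hg_cont.integrable_of_hasCompactSupport hg_supp
    have step : ‖(∫ x, g (ι n x) ∂(μ n)) - ∫ x, g x ∂(μ n)‖ ≤ ε' * (M + 1) := by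
      calc ‖(∫ x, g (ι n x) ∂(μ n)) - ∫ x, g x ∂(μ n)‖
          = ‖∫ x, (g (ι n x) - g x) ∂(μ n)‖ := by rw [integral_sub hint1 hint2]
        _ ≤ ∫ x, ‖g (ι n x) - g x‖ ∂(μ n) := norm_integral_le_integral_norm _
        _ ≤ ∫ x, ε' * χ₂ x ∂(μ n) := by
            apply integral_mono_ae (hint1.sub hint2).norm (hintχ.const_mul ε')
            filter_upwards [haen n] with x hx using hpt x hx
        _ = ε' * ∫ x, χ₂ x ∂(μ n) := integral_const_mul ε' _
        _ ≤ ε' * (M + 1) := mul_le_mul_of_nonneg_left hn2.le hε'pos.le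
    have hfin : ε' * (M + 1) < ε := by
      rw [hε'_def, div_mul_eq_mul_div, mul_comm (2:ℝ) (M+1), ← div_div]
      rw [mul_div_assoc, div_self hM1.ne', mul_one]
      linarith
    exact lt_of_le_of_lt step hfin
  have := hdiff.add (hweak g hg_cont hg_supp)
  simpa using this

/-- In the basic setting (locally compact separable metric space `X`,
closed sets `A n → A` in Hausdorff distance, Radon measures `μ n` on `A n` converging
weakly to `μ` on `A`, and Borel maps `ι n : A n → A` with `sup dist (ι n x) x → 0`),
the pushforwards `μ n ∘ ι n ⁻¹` converge weakly to `μ` on `A`; in particular the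
`L²`-norms of `f ∘ ι n` converge to the `L²`-norm of `f` for every `f ∈ C_c(A)`. -/
theorem pushforward_weak_convergence
    {X : Type*} [MetricSpace X] [TopologicalSpace.SeparableSpace X] [LocallyCompactSpace X]
    [MeasurableSpace X] [BorelSpace X]
    (A : ℕ → Set X) (Alim : Set X)
    (hA : ∀ n, IsClosed (A n)) (hAlim : IsClosed Alim)
    (hfin : ∀ n, EMetric.hausdorffEdist (A n) Alim ≠ ⊤)
    (htend : Tendsto (fun n => Metric.hausdorffDist (A n) Alim) atTop (𝓝 0))
    (μ : ℕ → Measure X) (μlim : Measure X)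
    [∀ n, (μ n).Regular] [μlim.Regular]
    (hsupp : ∀ n, μ n ((A n)ᶜ) = 0) (hsuppl : μlim (Alimᶜ) = 0)
    (hweak : ∀ f : X → ℝ, Continuous f → HasCompactSupport f →
      Tendsto (fun n => ∫ x, f x ∂(μ n)) atTop (𝓝 (∫ x, f x ∂μlim)))
    (ι : ℕ → X → X)
    (hιmaps : ∀ n, Set.MapsTo (ι n) (A n) Alim)
    (hιmeas : ∀ n, Measurable ((A n).restrict (ι n)))
    (hιdist : ∀ ε : ℝ, 0 < ε → ∃ N : ℕ, ∀ n ≥ N, ∀ x ∈ A n, dist (ι n x) x < ε) :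
    -- weak convergence of `μ n ∘ ι n ⁻¹` to `μ` on `(A, ρ)`
    (∀ f : X → ℝ, ContinuousOn f Alim →
      IsCompact (closure {x ∈ Alim | f x ≠ 0}) →
      Tendsto (fun n => ∫ x, f (ι n x) ∂(μ n)) atTop (𝓝 (∫ x, f x ∂μlim))) ∧
    -- convergence of the `L²`-norms
    (∀ f : X → ℝ, ContinuousOn f Alim →
      IsCompact (closure {x ∈ Alim | f x ≠ 0}) →
      Tendsto (fun n => ∫ x, (f (ι n x)) ^ 2 ∂(μ n)) atTop
        (𝓝 (∫ x, (f x) ^ 2 ∂μlim))) := by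
  constructor
  · intro f hf hKc
    exact key_convergence A Alim hA hAlim μ μlim hsupp hsuppl hweak ι hιmaps hιmeas hιdist
      f hf hKc
  · intro f hf hKc
    have hset : {x ∈ Alim | f x ^ 2 ≠ 0} = {x ∈ Alim | f x ≠ 0} := by
      ext x
      simp [pow_eq_zero_iff]
    exact key_convergence A Alim hA hAlim μ μlim hsupp hsuppl hweak ι hιmaps hιmeas hιdist
      (fun y => f y ^ 2) (hf.pow 2) (by simp only [hset]; exact hKc)
end

section
/- Let (X, ρ) be a locally compact separable metric space, {A_n} and A closed subsets with δ_H(A_n, A) → 0, and suppose f_n ∈ C(A_n) are locally uniformly bounded and equicontinuous, meaning for every compact K ⊂ X, sup_n ‖f_n|_{A_n∩K}‖_∞ < ∞ and lim_{δ→0} sup{|f_n(x) − f_n(y)| : n ≥ 1, x, y ∈ A_n ∩ K, ρ(x, y) < δ} = 0. Then there exist f ∈ C(A) and a subsequence {f_{n_k}} such that f_{n_k} ↣ f, i.e., f_{n_k}(x_{n_k}) → f(x) whenever x_{n_k} ∈ A_{n_k} converges to x ∈ A. -/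
open Metric MeasureTheory Filter Topology

/-- Generalized locally uniform convergence `f n ↣ g` for functions defined on
varying sets `A n` converging to `Alim`: `f n (x n) → g x` whenever `x n ∈ A n`
converges to `x ∈ Alim`. -/
def ConvTo {X : Type*} [MetricSpace X] (A : ℕ → Set X) (Alim : Set X)
    (f : ℕ → X → ℝ) (g : X → ℝ) : Prop :=
  ∀ (x : ℕ → X) (x₀ : X), (∀ n, x n ∈ A n) → x₀ ∈ Alim →
    Tendsto x atTop (𝓝 x₀) → Tendsto (fun n => f n (x n)) atTop (𝓝 (g x₀))

/-- (Arzelà–Ascoli for varying sets.) If `f n ∈ C(A n)` are locally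
uniformly bounded and equicontinuous, then some subsequence converges in the sense
`↣` to a continuous function on `A`. -/
theorem arzela_ascoli_varying_sets
    {X : Type*} [MetricSpace X] [TopologicalSpace.SeparableSpace X] [LocallyCompactSpace X]
    (A : ℕ → Set X) (Alim : Set X)
    (hA : ∀ n, IsClosed (A n)) (hAlim : IsClosed Alim)
    (hfin : ∀ n, EMetric.hausdorffEdist (A n) Alim ≠ ⊤)
    (htend : Tendsto (fun n => Metric.hausdorffDist (A n) Alim) atTop (𝓝 0))
    (f : ℕ → X → ℝ) (hf : ∀ n, ContinuousOn (f n) (A n))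
    (hbdd : ∀ K : Set X, IsCompact K → ∃ M : ℝ, ∀ n, ∀ x ∈ A n ∩ K, |f n x| ≤ M)
    (hequi : ∀ K : Set X, IsCompact K → ∀ ε : ℝ, 0 < ε → ∃ δ : ℝ, 0 < δ ∧
      ∀ n, ∀ x ∈ A n ∩ K, ∀ y ∈ A n ∩ K, dist x y < δ → |f n x - f n y| < ε) :
    ∃ g : X → ℝ, ContinuousOn g Alim ∧
      ∃ φ : ℕ → ℕ, StrictMono φ ∧
        ConvTo (fun k => A (φ k)) Alim (fun k => f (φ k)) g := by
  classical
  rcases Alim.eq_empty_or_nonempty with hAe | hAne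
  · refine ⟨fun _ => 0, by simp [hAe], id, strictMono_id, ?_⟩
    intro x x₀ hx hx₀ hxx
    rw [hAe] at hx₀
    exact absurd hx₀ (Set.notMem_empty x₀)
  -- Every `A n` is nonempty and admits good approximations of points of `Alim`.
  have happrox : ∀ n, ∀ x ∈ Alim, ∃ y ∈ A n,
      dist x y < Metric.hausdorffDist (A n) Alim + 1 / (n + 1) := by
    intro n x hx
    have hne : (A n).Nonempty :=
      EMetric.nonempty_of_hausdorffEdist_ne_top hAne
        (by rw [EMetric.hausdorffEdist_comm]; exact hfin n)
    have h1 : Metric.infDist x (A n) ≤ Metric.hausdorffDist Alim (A n) :=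
      Metric.infDist_le_hausdorffDist_of_mem hx (by
        rw [EMetric.hausdorffEdist_comm]; exact hfin n)
    have h2 : Metric.infDist x (A n) < Metric.hausdorffDist (A n) Alim + 1 / (n + 1) := by
      rw [Metric.hausdorffDist_comm] at h1
      have : (0:ℝ) < 1 / (n + 1) := by positivity
      linarith
    exact (Metric.infDist_lt_iff hne).mp h2
  -- choice of approximation points
  set aseq : ℕ → X → X := fun n x =>
    if h : x ∈ Alim then (happrox n x h).choose else x with haseq_def
  have haseq_mem : ∀ n, ∀ x ∈ Alim, aseq n x ∈ A n := by
    intro n x hx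
    simp only [haseq_def, dif_pos hx]
    exact (happrox n x hx).choose_spec.1
  have haseq_dist : ∀ n, ∀ x ∈ Alim,
      dist x (aseq n x) < Metric.hausdorffDist (A n) Alim + 1 / (n + 1) := by
    intro n x hx
    simp only [haseq_def, dif_pos hx]
    exact (happrox n x hx).choose_spec.2
  have haseq_tendsto : ∀ x ∈ Alim, Tendsto (fun n => aseq n x) atTop (𝓝 x) := by
    intro x hx
    rw [tendsto_iff_dist_tendsto_zero]
    have hb : Tendsto (fun n : ℕ => Metric.hausdorffDist (A n) Alim + 1 / (n + 1))
        atTop (𝓝 0) := by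
      have := htend.add tendsto_one_div_add_atTop_nhds_zero_nat
      simpa using this
    refine squeeze_zero (fun n => dist_nonneg) (fun n => ?_) hb
    rw [dist_comm]
    exact (haseq_dist n x hx).le
  -- the key local equicontinuity statement
  have keyE : ∀ x ∈ Alim, ∀ ε : ℝ, 0 < ε → ∃ δ > 0, ∀ n, ∀ p ∈ A n, ∀ q ∈ A n,
      dist p x < δ → dist q x < δ → |f n p - f n q| < ε := by
    intro x hx ε hε
    obtain ⟨K, hKc, hKn⟩ := exists_compact_mem_nhds x
    obtain ⟨r, hr, hrK⟩ := Metric.mem_nhds_iff.mp hKn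
    obtain ⟨δ', hδ'0, hδ'⟩ := hequi K hKc ε hε
    refine ⟨min r (δ' / 2), by positivity, ?_⟩
    intro n p hp q hq hpx hqx
    have hpK : p ∈ K := hrK (mem_ball.mpr (lt_of_lt_of_le hpx (min_le_left _ _)))
    have hqK : q ∈ K := hrK (mem_ball.mpr (lt_of_lt_of_le hqx (min_le_left _ _)))
    have hpq : dist p q < δ' := by
      have h1 : dist p x < δ' / 2 := lt_of_lt_of_le hpx (min_le_right _ _)
      have h2 : dist q x < δ' / 2 := lt_of_lt_of_le hqx (min_le_right _ _)
      calc dist p q ≤ dist p x + dist x q := dist_triangle p x q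
        _ = dist p x + dist q x := by rw [dist_comm x q]
        _ < δ' := by linarith
    exact hδ' n p ⟨hp, hpK⟩ q ⟨hq, hqK⟩ hpq
  -- boundedness along approximation sequences
  have hbound : ∀ x ∈ Alim, ∃ C : ℝ, ∀ n, |f n (aseq n x)| ≤ C := by
    intro x hx
    obtain ⟨K, hKc, hKn⟩ := exists_compact_mem_nhds x
    obtain ⟨M, hM⟩ := hbdd K hKc
    have hev : ∀ᶠ n in atTop, aseq n x ∈ K :=
      (haseq_tendsto x hx).eventually_mem hKn
    obtain ⟨N, hN⟩ := eventually_atTop.mp hev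
    refine ⟨max M ((Finset.range (N + 1)).sup' ⟨0, by simp⟩ fun n => |f n (aseq n x)|), ?_⟩
    intro n
    rcases le_or_gt N n with h | h
    · exact le_trans (hM n _ ⟨haseq_mem n x hx, hN n h⟩) (le_max_left _ _)
    · refine le_trans ?_ (le_max_right _ _)
      exact Finset.le_sup' (f := fun n => |f n (aseq n x)|)
        (Finset.mem_range.mpr (by omega))
  -- a dense sequence in Alim
  have : Nonempty ↥Alim := hAne.to_subtype
  have hsepA : TopologicalSpace.SeparableSpace ↥Alim :=
    (TopologicalSpace.IsSeparable.of_separableSpace Alim).separableSpace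
  set D : ℕ → X := fun m => (TopologicalSpace.denseSeq ↥Alim m : X) with hD_def
  have hD_mem : ∀ m, D m ∈ Alim := fun m => (TopologicalSpace.denseSeq ↥Alim m).2
  have hD_dense : ∀ x ∈ Alim, ∀ ε : ℝ, 0 < ε → ∃ m, dist x (D m) < ε := by
    intro x hx ε hε
    have hd := TopologicalSpace.denseRange_denseSeq ↥Alim
    have hx' : (⟨x, hx⟩ : ↥Alim) ∈ closure (Set.range (TopologicalSpace.denseSeq ↥Alim)) := by
      rw [hd.closure_range]; trivial
    rw [Metric.mem_closure_iff] at hx'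
    obtain ⟨y, hy, hdy⟩ := hx' ε hε
    obtain ⟨m, rfl⟩ := hy
    exact ⟨m, by simpa [Subtype.dist_eq] using hdy⟩
  -- diagonal extraction via compactness of a product of intervals
  choose B hB using fun m => hbound (D m) (hD_mem m)
  set u : ℕ → ℕ → ℝ := fun n m => f n (aseq n (D m)) with hu_def
  have hS : IsCompact (Set.univ.pi fun m : ℕ => Set.Icc (-(B m)) (B m)) :=
    isCompact_univ_pi fun m => isCompact_Icc
  have hu_mem : ∀ n, u n ∈ Set.univ.pi fun m : ℕ => Set.Icc (-(B m)) (B m) := by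
    intro n m _
    exact abs_le.mp (hB m n)
  obtain ⟨L, _, φ, hφ, hLconv⟩ := hS.tendsto_subseq hu_mem
  have hLm : ∀ m, Tendsto (fun k => f (φ k) (aseq (φ k) (D m))) atTop (𝓝 (L m)) := by
    intro m
    have := tendsto_pi_nhds.mp hLconv m
    simpa [hu_def, Function.comp] using this
  have hφtop : Tendsto φ atTop atTop := hφ.tendsto_atTop
  have haseqφ : ∀ x ∈ Alim, Tendsto (fun k => aseq (φ k) x) atTop (𝓝 x) :=
    fun x hx => (haseq_tendsto x hx).comp hφtop
  set v : ℕ → X → ℝ := fun k x => f (φ k) (aseq (φ k) x) with hv_def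
  -- Cauchy property of the approximating values at every point of Alim
  have hcauchy : ∀ x ∈ Alim, CauchySeq fun k => v k x := by
    intro x hx
    rw [Metric.cauchySeq_iff]
    intro ε hε
    obtain ⟨δ, hδ0, hδ⟩ := keyE x hx (ε / 3) (by positivity)
    obtain ⟨m, hm⟩ := hD_dense x hx (δ / 2) (by positivity)
    have h1 : ∀ᶠ k in atTop, dist (aseq (φ k) x) x < δ :=
      (haseqφ x hx).eventually (Metric.eventually_nhds_iff.mpr
        ⟨δ, hδ0, fun {y} hy => hy⟩) |>.mono fun k hk => hk
    have h2 : ∀ᶠ k in atTop, dist (aseq (φ k) (D m)) x < δ := by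
      have := (haseqφ (D m) (hD_mem m)).eventually
        (Metric.eventually_nhds_iff.mpr ⟨δ / 2, by positivity, fun {y} hy => hy⟩)
      refine this.mono fun k hk => ?_
      calc dist (aseq (φ k) (D m)) x ≤ dist (aseq (φ k) (D m)) (D m) + dist (D m) x :=
            dist_triangle _ _ _
        _ < δ / 2 + δ / 2 := by
            rw [dist_comm (D m) x]
            exact add_lt_add hk hm
        _ = δ := by ring
    have h3 : ∀ᶠ k in atTop, |v k x - v k (D m)| < ε / 3 := by
      refine (h1.and h2).mono fun k ⟨h1k, h2k⟩ => ?_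
      exact hδ (φ k) _ (haseq_mem (φ k) x hx) _ (haseq_mem (φ k) (D m) (hD_mem m)) h1k h2k
    have h4 : CauchySeq fun k => v k (D m) := (hLm m).cauchySeq
    rw [Metric.cauchySeq_iff] at h4
    obtain ⟨N₁, hN₁⟩ := h4 (ε / 3) (by positivity)
    obtain ⟨N₂, hN₂⟩ := eventually_atTop.mp h3
    refine ⟨max N₁ N₂, fun k hk l hl => ?_⟩
    have hk₁ := le_trans (le_max_left _ _) hk
    have hl₁ := le_trans (le_max_left _ _) hl
    have hk₂ := hN₂ k (le_trans (le_max_right _ _) hk)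
    have hl₂ := hN₂ l (le_trans (le_max_right _ _) hl)
    have hmid := hN₁ k hk₁ l hl₁
    rw [Real.dist_eq] at hmid ⊢
    calc |v k x - v l x|
        = |(v k x - v k (D m)) + (v k (D m) - v l (D m)) + (v l (D m) - v l x)| := by
          ring_nf
      _ ≤ |v k x - v k (D m)| + |v k (D m) - v l (D m)| + |v l (D m) - v l x| := by
          exact abs_add_three _ _ _
      _ < ε / 3 + ε / 3 + ε / 3 := by
          refine add_lt_add (add_lt_add hk₂ hmid) ?_
          rw [abs_sub_comm]; exact hl₂
      _ = ε := by ring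
  set g : X → ℝ := fun x => limUnder atTop fun k => v k x with hg_def
  have hg : ∀ x ∈ Alim, Tendsto (fun k => v k x) atTop (𝓝 (g x)) := fun x hx =>
    (hcauchy x hx).tendsto_limUnder
  -- the key generalized convergence
  have hconv : ∀ (y : ℕ → X) (x : X), (∀ k, y k ∈ A (φ k)) → x ∈ Alim →
      Tendsto y atTop (𝓝 x) → Tendsto (fun k => f (φ k) (y k)) atTop (𝓝 (g x)) := by
    intro y x hy hx hyx
    have hvx := hg x hx
    have hdiff : Tendsto (fun k => f (φ k) (y k) - v k x) atTop (𝓝 0) := by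
      rw [NormedAddCommGroup.tendsto_nhds_zero]
      intro ε hε
      obtain ⟨δ, hδ0, hδ⟩ := keyE x hx ε hε
      have h1 : ∀ᶠ k in atTop, dist (y k) x < δ :=
        hyx.eventually (Metric.eventually_nhds_iff.mpr ⟨δ, hδ0, fun {z} hz => hz⟩)
      have h2 : ∀ᶠ k in atTop, dist (aseq (φ k) x) x < δ :=
        (haseqφ x hx).eventually (Metric.eventually_nhds_iff.mpr ⟨δ, hδ0, fun {z} hz => hz⟩)
      refine (h1.and h2).mono fun k ⟨h1k, h2k⟩ => ?_
      have := hδ (φ k) _ (hy k) _ (haseq_mem (φ k) x hx) h1k h2k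
      simpa [Real.norm_eq_abs] using this
    have := hdiff.add hvx
    simpa using this
  refine ⟨g, ?_, φ, hφ, ?_⟩
  · -- continuity of g on Alim
    intro x hx
    rw [Metric.continuousWithinAt_iff]
    intro ε hε
    obtain ⟨δ, hδ0, hδ⟩ := keyE x hx (ε / 2) (by positivity)
    refine ⟨δ / 2, by positivity, fun {y} hy hyx => ?_⟩
    have hkey : ∀ᶠ k in atTop, |v k y - v k x| < ε / 2 := by
      have h1 : ∀ᶠ k in atTop, dist (aseq (φ k) x) x < δ :=
        (haseqφ x hx).eventually (Metric.eventually_nhds_iff.mpr ⟨δ, hδ0, fun {z} hz => hz⟩)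
      have h2 : ∀ᶠ k in atTop, dist (aseq (φ k) y) x < δ := by
        have := (haseqφ y hy).eventually
          (Metric.eventually_nhds_iff.mpr ⟨δ / 2, by positivity, fun {z} hz => hz⟩)
        refine this.mono fun k hk => ?_
        calc dist (aseq (φ k) y) x ≤ dist (aseq (φ k) y) y + dist y x := dist_triangle _ _ _
          _ < δ / 2 + δ / 2 := add_lt_add hk hyx
          _ = δ := by ring
      refine (h1.and h2).mono fun k ⟨h1k, h2k⟩ => ?_
      exact hδ (φ k) _ (haseq_mem (φ k) y hy) _ (haseq_mem (φ k) x hx) h2k h1k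
    have hlim : Tendsto (fun k => |v k y - v k x|) atTop (𝓝 |g y - g x|) :=
      ((hg y hy).sub (hg x hx)).abs
    have hle : |g y - g x| ≤ ε / 2 :=
      le_of_tendsto hlim (hkey.mono fun k hk => hk.le)
    rw [Real.dist_eq]
    linarith
  · -- the generalized convergence
    intro x x₀ hx hx₀ hxx
    exact hconv x x₀ hx hx₀ hxx
end

section
/- Let (X, ρ) be a locally compact separable metric space with closed subsets A_n → A in Hausdorff distance, and suppose f_{m,n} ∈ C(A_n) and f_m, f ∈ C(A) satisfy: f_{m,n} ↣ f_m as n → ∞ for each m, and f_m → f locally uniformly as m → ∞. Then there exist integers m(n) → ∞ such that f_{m(n),n} ↣ f as n → ∞. -/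
open Metric MeasureTheory Filter Topology

lemma convto_eta {X : Type*} [MetricSpace X] {A : ℕ → Set X} {Alim : Set X}
    (htend : Tendsto (fun n => hausdorffDist (A n) Alim) atTop (𝓝 0)) :
    Tendsto (fun n : ℕ => hausdorffDist (A n) Alim + 1/(n+1)) atTop (𝓝 0) := by
  simpa using htend.add tendsto_one_div_add_atTop_nhds_zero_nat

lemma convto_exists_approx {X : Type*} [MetricSpace X]
    {A : ℕ → Set X} {Alim : Set X}
    (hAne : ∀ n, (A n).Nonempty)
    (hfin : ∀ n, EMetric.hausdorffEdist (A n) Alim ≠ ⊤)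
    (htend : Tendsto (fun n => hausdorffDist (A n) Alim) atTop (𝓝 0))
    {x₀ : X} (hx₀ : x₀ ∈ Alim) :
    ∃ a : ℕ → X, (∀ n, a n ∈ A n) ∧ Tendsto a atTop (𝓝 x₀) := by
  have h : ∀ n : ℕ, ∃ z ∈ A n, dist x₀ z < hausdorffDist (A n) Alim + 1/(n+1) := by
    intro n
    have h1 : infDist x₀ (A n) ≤ hausdorffDist (A n) Alim := by
      have := infDist_le_hausdorffDist_of_mem hx₀
        (show Metric.hausdorffEDist Alim (A n) ≠ ⊤ by
          rw [EMetric.hausdorffEdist_comm]; exact hfin n)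
      rwa [hausdorffDist_comm] at this
    have h2 : infDist x₀ (A n) < hausdorffDist (A n) Alim + 1/(n+1) :=
      h1.trans_lt (lt_add_of_pos_right _ (by positivity))
    exact (infDist_lt_iff (hAne n)).1 h2
  choose a ha hd using h
  refine ⟨a, ha, ?_⟩
  rw [tendsto_iff_dist_tendsto_zero]
  refine squeeze_zero (fun n => dist_nonneg) (fun n => ?_) (convto_eta htend)
  rw [dist_comm]; exact (hd n).le
lemma convto_quant {X : Type*} [MetricSpace X]
    {A : ℕ → Set X} {Alim : Set X} (hAlim : IsClosed Alim) (hne : Alim.Nonempty)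
    (hAne : ∀ n, (A n).Nonempty)
    (hfin : ∀ n, EMetric.hausdorffEdist (A n) Alim ≠ ⊤)
    (htend : Tendsto (fun n => hausdorffDist (A n) Alim) atTop (𝓝 0))
    (G : ℕ → X → ℝ) (g : X → ℝ) (hg : ContinuousOn g Alim)
    (hconv : ConvTo A Alim G g)
    {K : Set X} (hK : IsCompact K) (ε : ℝ) (hε : 0 < ε) :
    ∃ N : ℕ, ∀ n ≥ N, ∀ x ∈ A n ∩ K, ∀ y ∈ Alim,
      dist x y ≤ hausdorffDist (A n) Alim + 1/(n+1) →
      |G n x - g y| < ε := by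
  classical
  by_contra hcon
  push_neg at hcon
  have hfreq : ∃ᶠ n in atTop, ∃ x ∈ A n ∩ K, ∃ y ∈ Alim,
      dist x y ≤ hausdorffDist (A n) Alim + 1/(n+1) ∧ ε ≤ |G n x - g y| := by
    rw [frequently_atTop]
    intro N
    obtain ⟨n, hn, x, hx, y, hy, hd, hb⟩ := hcon N
    exact ⟨n, hn, x, hx, y, hy, hd, hb⟩
  obtain ⟨φ, hφ, hP⟩ := extraction_of_frequently_atTop hfreq
  choose xw hxw yw hyw hd hb using hP
  obtain ⟨x₀, hx₀K, ψ, hψ, hu⟩ := hK.tendsto_subseq (fun j => (hxw j).2)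
  set σ : ℕ → ℕ := φ ∘ ψ with hσdef
  have hσm : StrictMono σ := hφ.comp hψ
  have hut : Tendsto (fun j => dist x₀ (xw (ψ j))) atTop (𝓝 0) := by
    have := tendsto_iff_dist_tendsto_zero.1 hu
    simpa [dist_comm] using this
  -- x₀ ∈ Alim
  have hx₀A : x₀ ∈ Alim := by
    rw [hAlim.mem_iff_infDist_zero hne]
    have h1 : ∀ j, infDist x₀ Alim ≤
        hausdorffDist (A (σ j)) Alim + dist x₀ (xw (ψ j)) := by
      intro j
      have h2 : infDist x₀ Alim ≤ infDist (xw (ψ j)) Alim + dist x₀ (xw (ψ j)) :=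
        infDist_le_infDist_add_dist
      have h3 : infDist (xw (ψ j)) Alim ≤ hausdorffDist (A (σ j)) Alim :=
        infDist_le_hausdorffDist_of_mem (hxw (ψ j)).1 (hfin (σ j))
      linarith
    have h4 : Tendsto (fun j => hausdorffDist (A (σ j)) Alim + dist x₀ (xw (ψ j)))
        atTop (𝓝 0) := by
      simpa using (htend.comp hσm.tendsto_atTop).add hut
    have h5 : infDist x₀ Alim ≤ 0 := ge_of_tendsto' h4 h1
    exact le_antisymm h5 infDist_nonneg
  -- y (ψ j) → x₀
  have hησ : Tendsto (fun j => hausdorffDist (A (σ j)) Alim + 1/((σ j : ℝ)+1))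
      atTop (𝓝 0) := (convto_eta htend).comp hσm.tendsto_atTop
  have hvt : Tendsto (fun j => yw (ψ j)) atTop (𝓝 x₀) := by
    rw [tendsto_iff_dist_tendsto_zero]
    have hbd := hησ.add hut
    simp only [add_zero] at hbd
    refine squeeze_zero (fun j => dist_nonneg) (fun j => ?_) hbd
    have t1 := hd (ψ j)
    have t2 := dist_triangle (yw (ψ j)) (xw (ψ j)) x₀
    have t3 : dist (yw (ψ j)) (xw (ψ j)) = dist (xw (ψ j)) (yw (ψ j)) := dist_comm _ _
    have t4 : dist (xw (ψ j)) x₀ = dist x₀ (xw (ψ j)) := dist_comm _ _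
    have t5 : hausdorffDist (A (φ (ψ j))) Alim = hausdorffDist (A (σ j)) Alim := rfl
    have t6 : (φ (ψ j) : ℝ) = (σ j : ℝ) := rfl
    rw [t5, t6] at t1
    linarith
  -- filling sequence
  obtain ⟨a, haA, hat⟩ := convto_exists_approx hAne hfin htend hx₀A
  let w : ℕ → X := fun n => if h : ∃ j, σ j = n then xw (ψ h.choose) else a n
  have hwσ : ∀ j, w (σ j) = xw (ψ j) := by
    intro j
    have h : ∃ j', σ j' = σ j := ⟨j, rfl⟩
    have hj : h.choose = j := hσm.injective h.choose_spec
    simp only [w, dif_pos h, hj]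
  have hwA : ∀ n, w n ∈ A n := by
    intro n
    by_cases h : ∃ j, σ j = n
    · simp only [w, dif_pos h]
      have := (hxw (ψ h.choose)).1
      have hc : φ (ψ h.choose) = n := h.choose_spec
      rwa [hc] at this
    · simp only [w, dif_neg h]; exact haA n
  have hwt : Tendsto w atTop (𝓝 x₀) := by
    rw [Metric.tendsto_atTop]
    intro δ hδ
    obtain ⟨N1, hN1⟩ := Metric.tendsto_atTop.1 hat δ hδ
    obtain ⟨J, hJ⟩ := Metric.tendsto_atTop.1 hu δ hδ
    refine ⟨max N1 (σ J), fun n hn => ?_⟩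
    by_cases h : ∃ j, σ j = n
    · have hσc : σ h.choose = n := h.choose_spec
      have hJle : J ≤ h.choose := by
        have : σ J ≤ σ h.choose := by rw [hσc]; exact le_trans (le_max_right _ _) hn
        exact hσm.le_iff_le.1 this
      simp only [w, dif_pos h]
      exact hJ h.choose hJle
    · simp only [w, dif_neg h]
      exact hN1 n (le_trans (le_max_left _ _) hn)
  have hGw := hconv w x₀ hwA hx₀A hwt
  have hGσ : Tendsto (fun j => G (σ j) (xw (ψ j))) atTop (𝓝 (g x₀)) := by
    have h7 := hGw.comp hσm.tendsto_atTop
    have h8 : (fun j => G (σ j) (w (σ j))) = fun j => G (σ j) (xw (ψ j)) := by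
      funext j; rw [hwσ j]
    rwa [show ((fun n => G n (w n)) ∘ σ) = fun j => G (σ j) (w (σ j)) from rfl, h8] at h7
  have hgv : Tendsto (fun j => g (yw (ψ j))) atTop (𝓝 (g x₀)) := by
    have h9 : Tendsto (fun j => yw (ψ j)) atTop (𝓝[Alim] x₀) :=
      tendsto_nhdsWithin_iff.2 ⟨hvt, Eventually.of_forall (fun j => hyw (ψ j))⟩
    have h10 : Tendsto g (𝓝[Alim] x₀) (𝓝 (g x₀)) := hg x₀ hx₀A
    exact h10.comp h9
  have hd0 : Tendsto (fun j => G (σ j) (xw (ψ j)) - g (yw (ψ j))) atTop (𝓝 0) := by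
    simpa using hGσ.sub hgv
  have h2 : ∀ᶠ j in atTop, |G (σ j) (xw (ψ j)) - g (yw (ψ j))| < ε := by
    have := Metric.tendsto_nhds.1 hd0 ε hε
    simpa [Real.dist_eq] using this
  obtain ⟨j, hj⟩ := h2.exists
  exact absurd (hb (ψ j)) (not_le.2 hj)


/-- (Diagonal extraction.) If `F m n ↣ fl m` as `n → ∞` for each `m`,
and `fl m → f` locally uniformly on `Alim` as `m → ∞`, then there exist `m(n) → ∞`
with `F (m n) n ↣ f` as `n → ∞`. -/
theorem diagonal_convTo
    {X : Type*} [MetricSpace X] [TopologicalSpace.SeparableSpace X] [LocallyCompactSpace X]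
    (A : ℕ → Set X) (Alim : Set X)
    (hA : ∀ n, IsClosed (A n)) (hAlim : IsClosed Alim)
    (hfin : ∀ n, EMetric.hausdorffEdist (A n) Alim ≠ ⊤)
    (htend : Tendsto (fun n => Metric.hausdorffDist (A n) Alim) atTop (𝓝 0))
    (F : ℕ → ℕ → X → ℝ) (hF : ∀ m n, ContinuousOn (F m n) (A n))
    (fl : ℕ → X → ℝ) (hfl : ∀ m, ContinuousOn (fl m) Alim)
    (f : X → ℝ) (hf : ContinuousOn f Alim)
    (hconv : ∀ m, ConvTo A Alim (fun n => F m n) (fl m))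
    (hunif : TendstoLocallyUniformlyOn fl f atTop Alim) :
    ∃ m : ℕ → ℕ, Tendsto m atTop atTop ∧
      ConvTo A Alim (fun n => F (m n) n) f := by
  classical
  by_cases hne : Alim.Nonempty
  swap
  · refine ⟨id, tendsto_id, fun x x₀ hx hx₀ hxt => ?_⟩
    exact absurd ⟨x₀, hx₀⟩ hne
  have hAne : ∀ n, (A n).Nonempty := fun n =>
    EMetric.nonempty_of_hausdorffEdist_ne_top hne
      (by rw [EMetric.hausdorffEdist_comm]; exact hfin n)
  haveI : SecondCountableTopology X := UniformSpace.secondCountable_of_separable X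
  let K : CompactExhaustion X := CompactExhaustion.choice X
  -- uniform closeness of fl (M j) to f on Alim ∩ K j
  have hunifK : ∀ j : ℕ, ∃ M0, ∀ m ≥ M0, ∀ y ∈ Alim ∩ K j, |fl m y - f y| < 1/(j+1) := by
    intro j
    have hcomp : IsCompact (Alim ∩ K j) := (K.isCompact j).inter_left hAlim
    have h1 : TendstoUniformlyOn fl f atTop (Alim ∩ K j) :=
      (tendstoLocallyUniformlyOn_iff_tendstoUniformlyOn_of_compact hcomp).1
        (hunif.mono Set.inter_subset_left)
    have hε : (0:ℝ) < 1/(j+1) := by positivity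
    have h2 := (Metric.tendstoUniformlyOn_iff.1 h1) (1/(j+1)) hε
    obtain ⟨M0, hM0⟩ := h2.exists_forall_of_atTop
    refine ⟨M0, fun m hm y hy => ?_⟩
    have := hM0 m hm y hy
    rwa [Real.dist_eq, abs_sub_comm] at this
  choose M0 hM0 using hunifK
  set M : ℕ → ℕ := fun j => max j (M0 j) with hMdef
  have hMcl : ∀ j, ∀ y ∈ Alim ∩ K j, |fl (M j) y - f y| < 1/(j+1) :=
    fun j => hM0 j (M j) (le_max_right _ _)
  have hMj : ∀ j, j ≤ M j := fun j => le_max_left _ _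
  -- quantitative thresholds
  have hq : ∀ j : ℕ, ∃ N, ∀ n ≥ N, ∀ x ∈ A n ∩ K j, ∀ y ∈ Alim,
      dist x y ≤ hausdorffDist (A n) Alim + 1/(n+1) →
      |F (M j) n x - fl (M j) y| < 1/(j+1) := fun j =>
    convto_quant hAlim hne hAne hfin htend (F (M j)) (fl (M j)) (hfl (M j))
      (hconv (M j)) (K.isCompact j) (1/(j+1)) (by positivity)
  choose N0 hN0 using hq
  -- block thresholds
  obtain ⟨N, hN00, hNsucc⟩ : ∃ N : ℕ → ℕ, N 0 = 0 ∧
      ∀ j, N (j+1) = max (N j + 1) (N0 (j+1)) :=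
    ⟨fun j => Nat.rec (motive := fun _ => ℕ) 0 (fun j' ih => max (ih + 1) (N0 (j'+1))) j,
      rfl, fun j => rfl⟩
  have hNsm : StrictMono N := strictMono_nat_of_lt_succ (fun j => by
    rw [hNsucc]; exact lt_of_lt_of_le (Nat.lt_succ_self _) (le_max_left _ _))
  have hN0le : ∀ j, 1 ≤ j → N0 j ≤ N j := by
    intro j hj
    obtain ⟨j', rfl⟩ : ∃ j', j = j' + 1 := ⟨j - 1, by omega⟩
    rw [hNsucc]; exact le_max_right _ _
  -- block index
  let jn : ℕ → ℕ := fun n => Nat.findGreatest (fun j => N j ≤ n) n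
  have hjn1 : ∀ n, N (jn n) ≤ n := fun n =>
    Nat.findGreatest_spec (P := fun j => N j ≤ n) (m := 0) (Nat.zero_le n) (show N 0 ≤ n by rw [hN00]; exact Nat.zero_le n)
  have hjn3 : Tendsto jn atTop atTop := by
    rw [tendsto_atTop_atTop]
    intro b
    refine ⟨N b, fun n hn => ?_⟩
    exact Nat.le_findGreatest (P := fun j => N j ≤ n) (le_trans (hNsm.le_apply) hn) hn
  refine ⟨fun n => M (jn n), ?_, ?_⟩
  · exact tendsto_atTop_mono (fun n => hMj (jn n)) hjn3
  intro x x₀ hxA hx₀ hxt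
  -- approximating points in Alim
  have hyex : ∀ n, ∃ y ∈ Alim, dist (x n) y ≤ hausdorffDist (A n) Alim + 1/(n+1) := by
    intro n
    have h1 : infDist (x n) Alim ≤ hausdorffDist (A n) Alim :=
      infDist_le_hausdorffDist_of_mem (hxA n) (hfin n)
    have h2 : infDist (x n) Alim < hausdorffDist (A n) Alim + 1/(n+1) :=
      h1.trans_lt (lt_add_of_pos_right _ (by positivity))
    obtain ⟨y, hy, hyd⟩ := (infDist_lt_iff hne).1 h2
    exact ⟨y, hy, hyd.le⟩
  choose y hyA hyd using hyex
  have hη : Tendsto (fun n : ℕ => hausdorffDist (A n) Alim + 1/(n+1)) atTop (𝓝 0) := by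
    simpa using htend.add tendsto_one_div_add_atTop_nhds_zero_nat
  have hxy0 : Tendsto (fun n => dist (x n) (y n)) atTop (𝓝 0) :=
    squeeze_zero (fun n => dist_nonneg) hyd hη
  have hxd : Tendsto (fun n => dist (x n) x₀) atTop (𝓝 0) :=
    tendsto_iff_dist_tendsto_zero.1 hxt
  have hyt : Tendsto y atTop (𝓝 x₀) := by
    rw [tendsto_iff_dist_tendsto_zero]
    have hbd := hxy0.add hxd
    simp only [add_zero] at hbd
    refine squeeze_zero (fun n => dist_nonneg) (fun n => ?_) hbd
    have := dist_triangle (y n) (x n) x₀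
    have h3 : dist (y n) (x n) = dist (x n) (y n) := dist_comm _ _
    linarith
  have hfy : Tendsto (fun n => f (y n)) atTop (𝓝 (f x₀)) := by
    have h9 : Tendsto y atTop (𝓝[Alim] x₀) :=
      tendsto_nhdsWithin_iff.2 ⟨hyt, Eventually.of_forall hyA⟩
    have h10 : Tendsto f (𝓝[Alim] x₀) (𝓝 (f x₀)) := hf x₀ hx₀
    exact h10.comp h9
  obtain ⟨j0, hj0⟩ := K.exists_mem x₀
  have hx₀i : x₀ ∈ interior (K (j0+1)) := K.subset_interior_succ j0 hj0
  have ev1 : ∀ᶠ n in atTop, x n ∈ interior (K (j0+1)) :=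
    hxt (isOpen_interior.mem_nhds hx₀i)
  have ev2 : ∀ᶠ n in atTop, y n ∈ interior (K (j0+1)) :=
    hyt (isOpen_interior.mem_nhds hx₀i)
  have ev3 : ∀ᶠ n in atTop, j0 + 1 ≤ jn n := hjn3.eventually_ge_atTop (j0+1)
  have key : ∀ᶠ n in atTop, ‖F (M (jn n)) n (x n) - f (y n)‖ ≤ 2/((jn n : ℝ)+1) := by
    filter_upwards [ev1, ev2, ev3] with n h1 h2 h3
    have hxK : x n ∈ K (jn n) := K.subset h3 (interior_subset h1)
    have hyK : y n ∈ K (jn n) := K.subset h3 (interior_subset h2)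
    have hNle : N0 (jn n) ≤ n := le_trans (hN0le (jn n) (by omega)) (hjn1 n)
    have b1 := hN0 (jn n) n hNle (x n) ⟨hxA n, hxK⟩ (y n) (hyA n) (hyd n)
    have b2 := hMcl (jn n) (y n) ⟨hyA n, hyK⟩
    rw [Real.norm_eq_abs]
    calc |F (M (jn n)) n (x n) - f (y n)| ≤
        |F (M (jn n)) n (x n) - fl (M (jn n)) (y n)| + |fl (M (jn n)) (y n) - f (y n)| :=
          abs_sub_le _ _ _
      _ ≤ 1/((jn n : ℝ)+1) + 1/((jn n : ℝ)+1) := add_le_add b1.le b2.le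
      _ = 2/((jn n : ℝ)+1) := by ring
  have h2j : Tendsto (fun n => 2/((jn n : ℝ)+1)) atTop (𝓝 0) := by
    have h4 : Tendsto (fun j : ℕ => 2/((j : ℝ)+1)) atTop (𝓝 0) := by
      have := tendsto_one_div_add_atTop_nhds_zero_nat.const_mul (2:ℝ)
      simp only [mul_zero] at this
      convert this using 2 with j
      ring
    exact h4.comp hjn3
  have hdiff : Tendsto (fun n => F (M (jn n)) n (x n) - f (y n)) atTop (𝓝 0) :=
    squeeze_zero_norm' key h2j
  have hfin2 : Tendsto (fun n => (F (M (jn n)) n (x n) - f (y n)) + f (y n)) atTop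
      (𝓝 (0 + f x₀)) := hdiff.add hfy
  simpa using hfin2
end

section
/- Let (X, ρ) be a compact metric space, with closed subsets A_n → A in Hausdorff distance and Radon probability measures μ_n on A_n converging weakly to μ on A. If f_n ∈ C(A_n) satisfy f_n ↣ f for some f ∈ C(A), then f ∈ L²(A; μ) and f_n converges to f strongly in L², i.e., there exist u_j ∈ C(A) with ‖u_j − f‖_{L²(A;μ)} → 0 and lim_j limsup_n ‖f_n − u_j ∘ I_n‖_{L²(A_n;μ_n)} = 0, where I_n : A_n → A are Borel maps with sup_{x} ρ(I_n(x), x) → 0. -/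
open Metric MeasureTheory Filter Topology

/-- On a compact metric space, if `μ n ⇒ μ` weakly (probability
measures supported on `A n` resp. `A`) and `f n ∈ C(A n)` satisfy `f n ↣ f`, then
`f ∈ L²(A; μ)` and `f n → f` strongly in `L²` in the Kuwae–Shioya sense. -/
theorem convTo_implies_strongL2
    {X : Type*} [MetricSpace X] [CompactSpace X]
    [MeasurableSpace X] [BorelSpace X]
    (A : ℕ → Set X) (Alim : Set X)
    (hA : ∀ n, IsClosed (A n)) (hAlim : IsClosed Alim)
    (hfin : ∀ n, EMetric.hausdorffEdist (A n) Alim ≠ ⊤)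
    (htend : Tendsto (fun n => Metric.hausdorffDist (A n) Alim) atTop (𝓝 0))
    (μ : ℕ → Measure X) (μlim : Measure X)
    [∀ n, IsProbabilityMeasure (μ n)] [IsProbabilityMeasure μlim]
    (hsupp : ∀ n, μ n ((A n)ᶜ) = 0) (hsuppl : μlim (Alimᶜ) = 0)
    (hweak : ∀ g : X → ℝ, Continuous g →
      Tendsto (fun n => ∫ x, g x ∂(μ n)) atTop (𝓝 (∫ x, g x ∂μlim)))
    (ι : ℕ → X → X)
    (hιmaps : ∀ n, Set.MapsTo (ι n) (A n) Alim)
    (hιmeas : ∀ n, Measurable ((A n).restrict (ι n)))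
    (hιdist : ∀ ε : ℝ, 0 < ε → ∃ N : ℕ, ∀ n ≥ N, ∀ x ∈ A n, dist (ι n x) x < ε)
    (f : ℕ → X → ℝ) (hf : ∀ n, ContinuousOn (f n) (A n))
    (flim : X → ℝ) (hflim : ContinuousOn flim Alim)
    (hconv : ConvTo A Alim f flim) :
    MemLp flim 2 μlim ∧
    ∃ u : ℕ → X → ℝ, (∀ j, ContinuousOn (u j) Alim) ∧
      Tendsto (fun j => ∫ x, (u j x - flim x) ^ 2 ∂μlim) atTop (𝓝 0) ∧
      Tendsto (fun j =>
          limsup (fun n => ∫ x, (f n x - u j (ι n x)) ^ 2 ∂(μ n)) atTop)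
        atTop (𝓝 0) := by
  classical
  -- Nonemptiness of `Alim` and of each `A n`
  have hAlimne : Alim.Nonempty := by
    by_contra h
    rw [Set.not_nonempty_iff_eq_empty] at h
    rw [h, Set.compl_empty] at hsuppl
    simp [measure_univ] at hsuppl
  have hAne : ∀ n, (A n).Nonempty := by
    intro n
    by_contra h
    rw [Set.not_nonempty_iff_eq_empty] at h
    have := hsupp n
    rw [h, Set.compl_empty] at this
    simp [measure_univ] at this
  -- Tietze extension of `flim` to all of `X`
  obtain ⟨G, hG⟩ := ContinuousMap.exists_restrict_eq (Y := ℝ) hAlim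
    ⟨_, continuousOn_iff_continuous_restrict.mp hflim⟩
  have hGeq : ∀ x ∈ Alim, G x = flim x := by
    intro x hx
    have := DFunLike.congr_fun hG (⟨x, hx⟩ : Alim)
    simpa using this
  -- a.e. membership
  have haeA : ∀ n, ∀ᵐ z ∂ (μ n), z ∈ A n := by
    intro n
    rw [ae_iff]
    exact hsupp n
  have haeAlim : ∀ᵐ z ∂ μlim, z ∈ Alim := by
    rw [ae_iff]; exact hsuppl
  have hGflim : flim =ᵐ[μlim] G := by
    filter_upwards [haeAlim] with z hz using (hGeq z hz).symm
  -- the strictly monotone maps tend to atTop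
  -- Key uniform estimate
  have key : ∀ ε : ℝ, 0 < ε → ∀ᶠ n in atTop, ∀ x ∈ A n, |f n x - G (ι n x)| ≤ ε := by
    intro ε hε
    by_contra hcon
    rw [Filter.not_eventually] at hcon
    have hcon' : ∃ᶠ n in atTop, ∃ x ∈ A n, ε < |f n x - G (ι n x)| := by
      apply hcon.mono
      intro n hn
      push_neg at hn
      obtain ⟨x, hx1, hx2⟩ := hn
      exact ⟨x, hx1, hx2⟩
    obtain ⟨φ, hφmono, hφ⟩ := extraction_of_frequently_atTop hcon'
    choose x hxA hxbad using hφ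
    obtain ⟨x₀, ψ, hψmono, hψtend⟩ := CompactSpace.tendsto_subseq x
    set σ : ℕ → ℕ := φ ∘ ψ with hσdef
    have hσmono : StrictMono σ := hφmono.comp hψmono
    have hσtop : Tendsto σ atTop atTop := hσmono.tendsto_atTop
    have hyA : ∀ k, x (ψ k) ∈ A (σ k) := fun k => hxA (ψ k)
    have hybad : ∀ k, ε < |f (σ k) (x (ψ k)) - G (ι (σ k) (x (ψ k)))| :=
      fun k => hxbad (ψ k)
    set y : ℕ → X := x ∘ ψ with hydef
    -- x₀ ∈ Alim
    have hHtend : Tendsto (fun k => Metric.hausdorffDist (A (σ k)) Alim) atTop (𝓝 0) :=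
      htend.comp hσtop
    have hx₀ : x₀ ∈ Alim := by
      rw [hAlim.mem_iff_infDist_zero hAlimne]
      have h1 : Tendsto (fun k => Metric.infDist (y k) Alim) atTop
          (𝓝 (Metric.infDist x₀ Alim)) :=
        ((continuous_infDist_pt Alim).continuousAt.tendsto.comp hψtend)
      have h2 : ∀ k, Metric.infDist (y k) Alim ≤ Metric.hausdorffDist (A (σ k)) Alim :=
        fun k => Metric.infDist_le_hausdorffDist_of_mem (hyA k) (hfin (σ k))
      have hle : Metric.infDist x₀ Alim ≤ 0 :=
        le_of_tendsto_of_tendsto h1 hHtend (Filter.Eventually.of_forall h2)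
      exact le_antisymm hle (Metric.infDist_nonneg)
    -- auxiliary points in `A n` close to `x₀`
    have hw : ∀ n : ℕ, ∃ w ∈ A n,
        dist x₀ w < Metric.hausdorffDist (A n) Alim + 1 / (n + 1 : ℝ) := by
      intro n
      apply (Metric.infDist_lt_iff (hAne n)).mp
      have h1 : Metric.infDist x₀ (A n) ≤ Metric.hausdorffDist Alim (A n) :=
        Metric.infDist_le_hausdorffDist_of_mem hx₀
          (by rw [EMetric.hausdorffEdist_comm]; exact hfin n)
      rw [Metric.hausdorffDist_comm] at h1
      have : (0 : ℝ) < 1 / (n + 1 : ℝ) := by positivity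
      linarith
    choose w hwA hwd using hw
    -- the glued sequence
    set z : ℕ → X := fun n => if h : ∃ k, σ k = n then y h.choose else w n with hzdef
    have hzσ : ∀ k, z (σ k) = y k := by
      intro k
      have h : ∃ k', σ k' = σ k := ⟨k, rfl⟩
      have : h.choose = k := hσmono.injective h.choose_spec
      simp only [hzdef, dif_pos h, this]
    have hzA : ∀ n, z n ∈ A n := by
      intro n
      by_cases h : ∃ k, σ k = n
      · simp only [hzdef, dif_pos h]
        have h2 := hyA h.choose
        rwa [h.choose_spec] at h2
      · simp only [hzdef, dif_neg h]
        exact hwA n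
    -- z tends to x₀
    have hbnd : Tendsto (fun n : ℕ => Metric.hausdorffDist (A n) Alim + 1 / (n + 1 : ℝ))
        atTop (𝓝 0) := by
      have h2 : Tendsto (fun n : ℕ => 1 / (n + 1 : ℝ)) atTop (𝓝 0) :=
        tendsto_one_div_add_atTop_nhds_zero_nat
      simpa using htend.add h2
    have hztend : Tendsto z atTop (𝓝 x₀) := by
      rw [Metric.tendsto_atTop]
      intro ε' hε'
      obtain ⟨K, hK⟩ := (Metric.tendsto_atTop.mp hψtend) ε' hε'
      obtain ⟨N₁, hN₁⟩ := (Metric.tendsto_atTop.mp hbnd) ε' hε'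
      refine ⟨max (σ K + 1) N₁, fun n hn => ?_⟩
      by_cases h : ∃ k, σ k = n
      · simp only [hzdef, dif_pos h]
        have hk : K < h.choose := by
          have h1 : σ K < n := lt_of_lt_of_le (Nat.lt_succ_self _)
            (le_trans (le_max_left _ _) hn)
          rw [← h.choose_spec] at h1
          exact hσmono.lt_iff_lt.mp h1
        have := hK h.choose hk.le
        simpa [hydef, Function.comp] using this
      · simp only [hzdef, dif_neg h]
        have h1 := hN₁ n (le_trans (le_max_right _ _) hn)
        have h2 := hwd n
        rw [Real.dist_eq, sub_zero, abs_of_nonneg (add_nonneg Metric.hausdorffDist_nonneg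
          (by positivity))] at h1
        rw [dist_comm]
        linarith
    -- use ConvTo
    have hfconv : Tendsto (fun k => f (σ k) (y k)) atTop (𝓝 (flim x₀)) := by
      have := (hconv z x₀ hzA hx₀ hztend).comp hσtop
      apply this.congr
      intro k
      simp [Function.comp, hzσ k]
    -- ι (σ k) (y k) → x₀
    have hιtend : Tendsto (fun k => ι (σ k) (y k)) atTop (𝓝 x₀) := by
      rw [Metric.tendsto_atTop]
      intro ε' hε'
      obtain ⟨N, hN⟩ := hιdist (ε' / 2) (by linarith)
      obtain ⟨K₁, hK₁⟩ := (Metric.tendsto_atTop.mp hψtend) (ε' / 2) (by linarith)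
      obtain ⟨K₂, hK₂⟩ := (tendsto_atTop_atTop.mp hσtop) N
      refine ⟨max K₁ K₂, fun k hk => ?_⟩
      have h1 : dist (ι (σ k) (y k)) (y k) < ε' / 2 :=
        hN (σ k) (hK₂ k (le_trans (le_max_right _ _) hk)) (y k) (hyA k)
      have h2 : dist (y k) x₀ < ε' / 2 := by
        have := hK₁ k (le_trans (le_max_left _ _) hk)
        simpa [hydef, Function.comp] using this
      calc dist (ι (σ k) (y k)) x₀ ≤ dist (ι (σ k) (y k)) (y k) + dist (y k) x₀ :=
            dist_triangle _ _ _
        _ < ε' := by linarith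
    have hGtend : Tendsto (fun k => G (ι (σ k) (y k))) atTop (𝓝 (flim x₀)) := by
      have := (G.continuous.tendsto x₀).comp hιtend
      rwa [hGeq x₀ hx₀] at this
    have hdiff : Tendsto (fun k => f (σ k) (y k) - G (ι (σ k) (y k))) atTop (𝓝 0) := by
      simpa using hfconv.sub hGtend
    have : ∀ᶠ k in atTop, |f (σ k) (y k) - G (ι (σ k) (y k))| < ε := by
      have := (Metric.tendsto_atTop.mp hdiff) ε hε
      obtain ⟨K, hK⟩ := this
      refine eventually_atTop.mpr ⟨K, fun k hk => ?_⟩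
      have := hK k hk
      rwa [Real.dist_eq, sub_zero] at this
    obtain ⟨k, hk⟩ := this.exists
    exact absurd (hybad k) (not_lt.mpr hk.le)
  -- Integral convergence
  have hint : Tendsto (fun n => ∫ x, (f n x - G (ι n x)) ^ 2 ∂(μ n)) atTop (𝓝 0) := by
    rw [Metric.tendsto_atTop]
    intro ε hε
    set ε' : ℝ := min ε 1 / 2 with hε'def
    have hε'pos : 0 < ε' := by
      simp only [hε'def]
      have : (0:ℝ) < min ε 1 := lt_min hε one_pos
      linarith
    have hε'sq : ε' ^ 2 < ε := by
      have h1 : ε' ≤ 1 / 2 := by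
        simp only [hε'def]
        have := min_le_right ε 1
        linarith
      have h2 : ε' ^ 2 ≤ ε' * (1/2) := by nlinarith
      have h3 : ε' ≤ ε / 2 := by
        simp only [hε'def]
        have := min_le_left ε 1
        linarith
      nlinarith
    obtain ⟨N, hN⟩ := eventually_atTop.mp (key ε' hε'pos)
    refine ⟨N, fun n hn => ?_⟩
    have hbound : ‖∫ x, (f n x - G (ι n x)) ^ 2 ∂(μ n)‖ ≤ ε' ^ 2 * ((μ n) Set.univ).toReal := by
      apply norm_integral_le_of_norm_le_const
      filter_upwards [haeA n] with z hz
      have h1 : |f n z - G (ι n z)| ≤ ε' := hN n hn z hz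
      have : (f n z - G (ι n z)) ^ 2 ≤ ε' ^ 2 := by
        rw [← sq_abs]
        exact pow_le_pow_left₀ (abs_nonneg _) h1 2
      rw [Real.norm_eq_abs, abs_of_nonneg (sq_nonneg _)]
      exact this
    rw [measure_univ] at hbound
    simp only [ENNReal.toReal_one, mul_one] at hbound
    rw [Real.dist_eq, sub_zero, ← Real.norm_eq_abs]
    exact lt_of_le_of_lt hbound hε'sq
  refine ⟨?_, fun _ => G, fun _ => G.continuous.continuousOn, ?_, ?_⟩
  · -- Memℒp
    obtain ⟨C, hC⟩ : ∃ C, ∀ v ∈ Set.range fun x => ‖G x‖, v ≤ C :=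
      (isCompact_range (G.continuous.norm)).bddAbove
    refine MemLp.ae_eq hGflim.symm (MemLp.of_bound G.continuous.aestronglyMeasurable C ?_)
    exact Filter.Eventually.of_forall fun z => hC _ ⟨z, rfl⟩
  · -- first limit: each term is zero
    have : ∀ j : ℕ, ∫ x, (G x - flim x) ^ 2 ∂μlim = 0 := by
      intro j
      apply integral_eq_zero_of_ae
      filter_upwards [haeAlim] with z hz
      simp [hGeq z hz]
    exact Tendsto.congr (fun j => (this j).symm) tendsto_const_nhds
  · -- second limit
    have hls : limsup (fun n => ∫ x, (f n x - G (ι n x)) ^ 2 ∂(μ n)) atTop = 0 :=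
      hint.limsup_eq
    exact Tendsto.congr (fun j => hls.symm) tendsto_const_nhds
end

section
/- Let F be a generalized Sierpiński carpet and for m ≥ 0 let F_m be its level-m approximation domain. Fix j ≥ 1 and a set I of index pairs (i, s) with i ∈ {1,…,d}, s ∈ {0,1}. Define K = F \ ⋃_{(i,s)∈I} {x ∈ F : ρ(x, ∂_{i,s}F_0) < L_F^{-j}/2} and similarly K_m for F_m, where ∂_{i,s}F_0 is the face {x_i = s} of the unit cube. Then K and each K_m are path-connected. -/
open Metric MeasureTheory Filter Topology

noncomputable section

/-- The closed subcube of `[0,1]^d` of side `L^{-n}` addressed by the word `w`. -/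
def wordCell (d L : ℕ) {n : ℕ} (w : Fin n → (Fin d → Fin L)) :
    Set (EuclideanSpace ℝ (Fin d)) :=
  {x | ∀ i : Fin d,
    (∑ j : Fin n, (w j i : ℝ) / (L : ℝ) ^ ((j : ℕ) + 1)) ≤ x i ∧
      x i ≤ (∑ j : Fin n, (w j i : ℝ) / (L : ℝ) ^ ((j : ℕ) + 1)) + 1 / (L : ℝ) ^ n}

/-- The level-`n` approximation `F_n`: the union of the surviving cells,
i.e. the cells addressed by words with all letters in the pattern `S`. -/
def approxSet (d L : ℕ) (S : Set (Fin d → Fin L)) (n : ℕ) :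
    Set (EuclideanSpace ℝ (Fin d)) :=
  ⋃ w ∈ {w : Fin n → (Fin d → Fin L) | ∀ j, w j ∈ S}, wordCell d L w

/-- The generalized Sierpiński carpet `F = ⋂ₙ Fₙ`. -/
def carpetSet (d L : ℕ) (S : Set (Fin d → Fin L)) :
    Set (EuclideanSpace ℝ (Fin d)) :=
  ⋂ n, approxSet d L S n

/-- Conditions (SC1)–(SC4) on the pattern `S` of a generalized Sierpiński carpet. -/
structure IsGSC (d L : ℕ) (S : Set (Fin d → Fin L)) : Prop where
  hd : 2 ≤ d
  hL : 3 ≤ L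
  nonempty : S.Nonempty
  proper : S ≠ Set.univ
  /-- (SC1) symmetry under all isometries of the unit cube. -/
  symm : ∀ (p : Equiv.Perm (Fin d)) (ε : Fin d → Bool) (k : Fin d → Fin L),
    k ∈ S → (fun i => if ε i then (k (p i)).rev else k (p i)) ∈ S
  /-- (SC2) the interior of `F₁` is connected. -/
  conn : IsConnected (interior (approxSet d L S 1))
  /-- (SC3) non-diagonality. -/
  nondiag : ∀ n : ℕ, 1 ≤ n → ∀ c : Fin d → ℕ, (∀ i, c i + 2 ≤ L ^ n) →
    (interior (approxSet d L S 1 ∩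
      {x : EuclideanSpace ℝ (Fin d) |
        ∀ i, (c i : ℝ) / (L : ℝ) ^ n ≤ x i ∧ x i ≤ ((c i : ℝ) + 2) / (L : ℝ) ^ n})).Nonempty →
    IsConnected (interior (approxSet d L S 1 ∩
      {x : EuclideanSpace ℝ (Fin d) |
        ∀ i, (c i : ℝ) / (L : ℝ) ^ n ≤ x i ∧ x i ≤ ((c i : ℝ) + 2) / (L : ℝ) ^ n}))
  /-- (SC4) the bottom edge along the first coordinate axis is included. -/
  borders : ∀ j : Fin L,
    (fun i : Fin d => if (i : ℕ) = 0 then j else ⟨0, by omega⟩) ∈ S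

/-- The face `∂_{i,s} F₀` of the unit cube: `{x ∈ [0,1]^d : x_i = s}`. -/
def cubeFace (d : ℕ) (p : Fin d × Bool) : Set (EuclideanSpace ℝ (Fin d)) :=
  {y | (∀ i, 0 ≤ y i ∧ y i ≤ 1) ∧ y p.1 = (if p.2 then 1 else 0)}

lemma joinedIn_of_chain {E : Type*} [NormedAddCommGroup E] [NormedSpace ℝ E] [CompleteSpace E]
    {F : Set E} (hF : IsClosed F) (c : ℕ → E) (x : E)
    (hc : Tendsto c atTop (nhds x)) (u : ℕ → ℝ) (hu : Summable u)
    (p : ∀ n, Path (c n) (c (n+1)))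
    (hpF : ∀ n t, p n t ∈ F)
    (hpb : ∀ n (t : unitInterval), ‖p n t - c n‖ ≤ u n) :
    JoinedIn F (c 0) x := by
  classical
  set g : ℕ → ℝ → E := fun n t => (p n).extend ((2:ℝ)^(n+1) * (t - (1 - (2⁻¹:ℝ)^n))) with hg
  have hrange : ∀ n t, ∃ s : unitInterval, g n t = p n s := by
    intro n t
    exact ⟨Set.projIcc 0 1 zero_le_one _, rfl⟩
  have hgF : ∀ n t, g n t ∈ F := by
    intro n t; obtain ⟨s, hs⟩ := hrange n t; rw [hs]; exact hpF n s
  have hgb : ∀ n t, ‖g n t - c n‖ ≤ u n := by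
    intro n t; obtain ⟨s, hs⟩ := hrange n t; rw [hs]; exact hpb n s
  have h2 : ∀ n : ℕ, (0:ℝ) < (2:ℝ)^(n+1) := fun n => by positivity
  have hg0 : ∀ n (t : ℝ), t ≤ 1 - (2⁻¹:ℝ)^n → g n t = c n := by
    intro n t ht
    have : (2:ℝ)^(n+1) * (t - (1 - (2⁻¹:ℝ)^n)) ≤ 0 := by
      apply mul_nonpos_of_nonneg_of_nonpos (le_of_lt (h2 n)); linarith
    simpa [hg] using (p n).extend_of_le_zero this
  have hg1 : ∀ n (t : ℝ), 1 - (2⁻¹:ℝ)^(n+1) ≤ t → g n t = c (n+1) := by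
    intro n t ht
    have key : (1:ℝ) ≤ (2:ℝ)^(n+1) * (t - (1 - (2⁻¹:ℝ)^n)) := by
      have h1 : (2⁻¹:ℝ)^n - (2⁻¹:ℝ)^(n+1) = (2⁻¹:ℝ)^(n+1) := by ring
      have h2' : (2:ℝ)^(n+1) * (2⁻¹:ℝ)^(n+1) = 1 := by
        rw [← mul_pow]; norm_num
      have : (2⁻¹:ℝ)^(n+1) ≤ t - (1 - (2⁻¹:ℝ)^n) := by linarith
      calc (1:ℝ) = (2:ℝ)^(n+1) * (2⁻¹:ℝ)^(n+1) := h2'.symm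
        _ ≤ _ := by
          apply mul_le_mul_of_nonneg_left this (le_of_lt (h2 n))
    simpa [hg] using (p n).extend_of_one_le key
  set γ : ℝ → E := fun t => c 0 + ∑' n, (g n t - c n) with hγ
  have hγcont : Continuous γ := by
    apply continuous_const.add
    apply continuous_tsum (u := u) _ hu (fun n t => hgb n t)
    intro n
    have h1 : Continuous fun t : ℝ => g n t := by
      apply Continuous.comp (p n).continuous_extend
      exact continuous_const.mul (continuous_id.sub continuous_const)
    exact h1.sub continuous_const
  have heval : ∀ (t : ℝ) (N : ℕ), (∀ n < N, 1 - (2⁻¹:ℝ)^(n+1) ≤ t) →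
      (∀ n, N < n → t ≤ 1 - (2⁻¹:ℝ)^n) → γ t = g N t := by
    intro t N h1 h2'
    have hz : ∀ n ∉ Finset.range (N+1), g n t - c n = 0 := by
      intro n hn
      simp only [Finset.mem_range, not_lt] at hn
      rw [hg0 n t (h2' n (by omega))]; simp
    have : ∑' n, (g n t - c n) = ∑ n ∈ Finset.range (N+1), (g n t - c n) := tsum_eq_sum hz
    rw [hγ]
    simp only []
    rw [this, Finset.sum_range_succ]
    have : ∀ n ∈ Finset.range N, g n t - c n = c (n+1) - c n := by
      intro n hn
      simp only [Finset.mem_range] at hn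
      rw [hg1 n t (h1 n hn)]
    rw [Finset.sum_congr rfl this, Finset.sum_range_sub]
    abel
  have hγ0 : γ 0 = c 0 := by
    rw [heval 0 0 (by omega) ?_]
    · have : g 0 0 = c 0 := hg0 0 0 (by norm_num)
      rw [this]
    · intro n hn
      have : (2⁻¹:ℝ)^n ≤ 1 := by
        apply pow_le_one₀ <;> norm_num
      linarith
  have hcF : ∀ n, c n ∈ F := by
    intro n
    have := hpF n 0
    rwa [(p n).source] at this
  have hxF : x ∈ F := hF.mem_of_tendsto hc (Eventually.of_forall hcF)
  have hsum : Summable (fun n => c (n+1) - c n) := by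
    apply Summable.of_norm_bounded hu
    intro n
    have := hpb n 1
    rwa [(p n).target] at this
  have hγ1 : γ 1 = x := by
    have hall : ∀ n, g n 1 = c (n+1) := by
      intro n
      apply hg1
      have : (0:ℝ) < (2⁻¹:ℝ)^(n+1) := by positivity
      linarith
    have hts : (∑' n, (g n (1:ℝ) - c n)) = ∑' n, (c (n+1) - c n) := by
      congr 1; funext n; rw [hall n]
    have hlim : Tendsto (fun N => ∑ n ∈ Finset.range N, (c (n+1) - c n)) atTop (nhds (x - c 0)) := by
      have : (fun N => ∑ n ∈ Finset.range N, (c (n+1) - c n)) = fun N => c N - c 0 := by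
        funext N; exact Finset.sum_range_sub _ _
      rw [this]
      exact hc.sub_const _
    have : ∑' n, (c (n+1) - c n) = x - c 0 :=
      tendsto_nhds_unique hsum.hasSum.tendsto_sum_nat hlim
    rw [hγ]; simp only []; rw [hts, this]; abel
  have hmemI : ∀ t : ℝ, 0 ≤ t → t ≤ 1 → γ t ∈ F := by
    intro t ht0 ht1
    rcases eq_or_lt_of_le ht1 with rfl | ht1'
    · rw [hγ1]; exact hxF
    · have hex : ∃ n : ℕ, t < 1 - (2⁻¹:ℝ)^(n+1) := by
        obtain ⟨n, hn⟩ := exists_pow_lt_of_lt_one (by linarith : (0:ℝ) < 1 - t) (by norm_num : (2⁻¹:ℝ) < 1)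
        refine ⟨n, ?_⟩
        have h3 : (2⁻¹:ℝ)^(n+1) ≤ (2⁻¹:ℝ)^n :=
          pow_le_pow_of_le_one (by norm_num) (by norm_num) (Nat.le_succ n)
        linarith
      set N := Nat.find hex with hN
      have hNs : t < 1 - (2⁻¹:ℝ)^(N+1) := Nat.find_spec hex
      have hNmin : ∀ n < N, 1 - (2⁻¹:ℝ)^(n+1) ≤ t := by
        intro n hn
        have := Nat.find_min hex hn
        linarith [not_lt.mp this]
      have hbig : ∀ n, N < n → t ≤ 1 - (2⁻¹:ℝ)^n := by
        intro n hn
        have : (2⁻¹:ℝ)^n ≤ (2⁻¹:ℝ)^(N+1) :=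
          pow_le_pow_of_le_one (by norm_num) (by norm_num) (by omega)
        linarith
      rw [heval t N hNmin hbig]
      exact hgF N t
  refine ⟨⟨⟨fun t => γ t, hγcont.comp continuous_subtype_val⟩, ?_, ?_⟩, ?_⟩
  · simpa using hγ0
  · simpa using hγ1
  · intro t
    exact hmemI t t.2.1 t.2.2

namespace CarpetAux

variable {d L : ℕ} {S : Set (Fin d → Fin L)}

/-- base corner of a cell -/
def wbase (L : ℕ) {d n : ℕ} (w : Fin n → (Fin d → Fin L)) (i : Fin d) : ℝ :=
  ∑ q : Fin n, (w q i : ℝ) / (L : ℝ) ^ ((q : ℕ) + 1)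

lemma mem_wordCell_iff {n : ℕ} {w : Fin n → (Fin d → Fin L)} {x : EuclideanSpace ℝ (Fin d)} :
    x ∈ wordCell d L w ↔ ∀ i, wbase L w i ≤ x i ∧ x i ≤ wbase L w i + 1 / (L : ℝ) ^ n :=
  Iff.rfl

section arith

variable (hL : 1 < L)
include hL

lemma Lpos : (0:ℝ) < (L:ℝ) := by exact_mod_cast Nat.lt_of_lt_of_le Nat.zero_lt_one hL.le

lemma Lpow_pos (n : ℕ) : (0:ℝ) < (L:ℝ)^n := pow_pos (Lpos hL) n

lemma sum_geom (n : ℕ) :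
    ∑ q : Fin n, ((L:ℝ) - 1) / (L : ℝ) ^ ((q : ℕ) + 1) = 1 - 1 / (L:ℝ) ^ n := by
  induction n with
  | zero => simp
  | succ n ih =>
    rw [Fin.sum_univ_castSucc]
    simp only [Fin.coe_castSucc, Fin.val_last]
    rw [ih]
    have hL0 : (L:ℝ) ≠ 0 := ne_of_gt (Lpos hL)
    field_simp
    ring

lemma sum_geom_tail (j m : ℕ) :
    ∑ q : Fin m, (if j ≤ (q:ℕ) then ((L:ℝ) - 1) / (L : ℝ) ^ ((q : ℕ) + 1) else 0)
      = 1 / (L:ℝ) ^ (min j m) - 1 / (L:ℝ) ^ m := by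
  induction m with
  | zero => simp
  | succ m ih =>
    rw [Fin.sum_univ_castSucc]
    simp only [Fin.coe_castSucc, Fin.val_last]
    rw [ih]
    have hL0 : (L:ℝ) ≠ 0 := ne_of_gt (Lpos hL)
    by_cases hjm : j ≤ m
    · rw [if_pos hjm, min_eq_left hjm, min_eq_left (by omega : j ≤ m + 1)]
      field_simp
      ring
    · rw [if_neg hjm, min_eq_right (by omega : m ≤ j), min_eq_right (by omega : m + 1 ≤ j)]
      ring

end arith

lemma wbase_nonneg {n : ℕ} (w : Fin n → (Fin d → Fin L)) (i : Fin d) : 0 ≤ wbase L w i := by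
  apply Finset.sum_nonneg
  intro q _
  positivity

lemma wbase_le (hL : 1 < L) {n : ℕ} (w : Fin n → (Fin d → Fin L)) (i : Fin d) :
    wbase L w i ≤ 1 - 1 / (L:ℝ) ^ n := by
  rw [← sum_geom hL n]
  apply Finset.sum_le_sum
  intro q _
  have hnum : ((w q i : ℕ) : ℝ) ≤ (L:ℝ) - 1 := by
    have h1 : ((w q i : ℕ) : ℝ) + 1 ≤ (L:ℝ) := by exact_mod_cast (w q i).isLt
    linarith
  gcongr


lemma mem_cube_of_mem_wordCell (hL : 1 < L) {n : ℕ} {w : Fin n → (Fin d → Fin L)}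
    {x : EuclideanSpace ℝ (Fin d)} (hx : x ∈ wordCell d L w) (i : Fin d) :
    0 ≤ x i ∧ x i ≤ 1 := by
  obtain ⟨h1, h2⟩ := mem_wordCell_iff.mp hx i
  constructor
  · exact le_trans (wbase_nonneg w i) h1
  · have := wbase_le hL w i
    have hp := Lpow_pos hL n
    linarith

lemma wbase_snoc {n : ℕ} (w : Fin n → (Fin d → Fin L)) (k : Fin d → Fin L) (i : Fin d) :
    wbase L (Fin.snoc w k : Fin (n+1) → (Fin d → Fin L)) i
      = wbase L w i + (k i : ℝ) / (L:ℝ) ^ (n + 1) := by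
  unfold wbase
  rw [Fin.sum_univ_castSucc]
  simp [Fin.snoc_castSucc, Fin.snoc_last]

lemma wbase_succ {n : ℕ} (w : Fin (n+1) → (Fin d → Fin L)) (i : Fin d) :
    wbase L w i = wbase L (w ∘ Fin.castSucc) i + (w (Fin.last n) i : ℝ) / (L:ℝ)^(n+1) := by
  unfold wbase
  rw [Fin.sum_univ_castSucc]
  simp [Function.comp]

lemma wordCell_subset_dropLast (hL : 1 < L) {n : ℕ} (w : Fin (n+1) → (Fin d → Fin L)) :
    wordCell d L w ⊆ wordCell d L (w ∘ Fin.castSucc) := by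
  intro x hx
  rw [mem_wordCell_iff] at hx ⊢
  intro i
  obtain ⟨h1, h2⟩ := hx i
  rw [wbase_succ w i] at h1 h2
  have hterm : (0:ℝ) ≤ (w (Fin.last n) i : ℝ) / (L:ℝ)^(n+1) := by positivity
  constructor
  · linarith
  · have hv : ((w (Fin.last n) i : ℕ) : ℝ) + 1 ≤ (L:ℝ) := by exact_mod_cast (w (Fin.last n) i).isLt
    have hpow : (0:ℝ) < (L:ℝ)^(n+1) := Lpow_pos hL _
    have hpow' : (0:ℝ) < (L:ℝ)^n := Lpow_pos hL _
    have key : (w (Fin.last n) i : ℝ) / (L:ℝ)^(n+1) + 1 / (L:ℝ)^(n+1) ≤ 1 / (L:ℝ)^n := by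
      rw [← add_div, div_le_div_iff₀ hpow hpow', pow_succ]
      have hL0 : (0:ℝ) < (L:ℝ) := Lpos hL
      calc ((w (Fin.last n) i : ℝ) + 1) * (L:ℝ)^n ≤ (L:ℝ) * (L:ℝ)^n := by nlinarith
        _ = 1 * ((L:ℝ)^n * L) := by ring
    linarith

lemma mem_approxSet_of {n : ℕ} {w : Fin n → (Fin d → Fin L)} (hw : ∀ q, w q ∈ S)
    {x : EuclideanSpace ℝ (Fin d)} (hx : x ∈ wordCell d L w) : x ∈ approxSet d L S n := by
  unfold approxSet
  exact Set.mem_biUnion hw hx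

lemma cell_subset_approx (hL : 1 < L) :
    ∀ {n : ℕ} (w : Fin n → (Fin d → Fin L)), (∀ q, w q ∈ S) → ∀ m ≤ n,
      wordCell d L w ⊆ approxSet d L S m := by
  intro n
  induction n with
  | zero =>
    intro w hw m hm
    have : m = 0 := Nat.le_zero.mp hm
    subst this
    exact fun x hx => mem_approxSet_of hw hx
  | succ n ih =>
    intro w hw m hm
    rcases Nat.lt_or_ge m (n+1) with hm' | hm'
    · exact (wordCell_subset_dropLast hL w).trans
        (ih (w ∘ Fin.castSucc) (fun q => hw _) m (by omega))
    · have : m = n + 1 := by omega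
      subst this
      exact fun x hx => mem_approxSet_of hw hx

lemma carpet_subset_approx (m : ℕ) : carpetSet d L S ⊆ approxSet d L S m :=
  Set.iInter_subset _ m

lemma convex_wordCell {n : ℕ} (w : Fin n → (Fin d → Fin L)) : Convex ℝ (wordCell d L w) := by
  intro x hx y hy a b ha hb hab
  intro i
  have hxi := hx i
  have hyi := hy i
  have hcoord : (a • x + b • y : EuclideanSpace ℝ (Fin d)) i = a * x i + b * y i := rfl
  rw [hcoord]
  have e1 : ∀ c : ℝ, c = a * c + b * c := by intro c; rw [← add_mul, hab, one_mul]
  constructor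
  · rw [e1 (∑ j : Fin n, (w j i : ℝ) / (L : ℝ) ^ ((j : ℕ) + 1))]
    exact add_le_add (mul_le_mul_of_nonneg_left hxi.1 ha) (mul_le_mul_of_nonneg_left hyi.1 hb)
  · rw [e1 ((∑ j : Fin n, (w j i : ℝ) / (L : ℝ) ^ ((j : ℕ) + 1)) + 1 / (L : ℝ) ^ n)]
    exact add_le_add (mul_le_mul_of_nonneg_left hxi.2 ha) (mul_le_mul_of_nonneg_left hyi.2 hb)

lemma continuous_coord (i : Fin d) : Continuous fun x : EuclideanSpace ℝ (Fin d) => x i := by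
  exact (continuous_apply i).comp (PiLp.continuous_ofLp 2 fun _ : Fin d => ℝ)

lemma isClosed_wordCell {n : ℕ} (w : Fin n → (Fin d → Fin L)) : IsClosed (wordCell d L w) := by
  have : wordCell d L w = ⋂ i : Fin d,
      ({x : EuclideanSpace ℝ (Fin d) | wbase L w i ≤ x i} ∩
       {x : EuclideanSpace ℝ (Fin d) | x i ≤ wbase L w i + 1 / (L:ℝ)^n}) := by
    ext x
    simp only [Set.mem_iInter, Set.mem_inter_iff, Set.mem_setOf_eq]
    exact Iff.rfl
  rw [this]
  apply isClosed_iInter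
  intro i
  exact (isClosed_le continuous_const (continuous_coord i)).inter
    (isClosed_le (continuous_coord i) continuous_const)

lemma isClosed_approxSet (n : ℕ) : IsClosed (approxSet d L S n) := by
  unfold approxSet
  apply Set.Finite.isClosed_biUnion (Set.toFinite _)
  intro w _
  exact isClosed_wordCell w

lemma isClosed_carpetSet : IsClosed (carpetSet d L S) :=
  isClosed_iInter fun n => isClosed_approxSet n

section letters

variable (h : IsGSC d L S)
include h

lemma hd0 : 0 < d := by have := h.hd; omega
lemma hL0' : 0 < L := by have := h.hL; omega
lemma hL1' : 1 < L := by have := h.hL; omega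

/-- the letter `e0 = 0`. -/
def eZ (hh : IsGSC d L S) : Fin L := ⟨0, hL0' hh⟩

/-- `eB b` is `0` or `L-1` according to `b`. -/
def eB (hh : IsGSC d L S) (b : Bool) : Fin L := if b then (eZ hh).rev else eZ hh

lemma edgeLtr_mem (i0 : Fin d) (v : Fin L) (b : Fin d → Bool) :
    (fun i => if i = i0 then v else eB h (b i)) ∈ S := by
  classical
  set z : Fin d := ⟨0, hd0 h⟩ with hz
  have hk0 : (fun i : Fin d => if (i : ℕ) = 0 then v else ⟨0, by have := h.hL; omega⟩) ∈ S :=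
    h.borders v
  have := h.symm (Equiv.swap z i0) (fun i => if i = i0 then false else b i) _ hk0
  convert this using 1
  funext i
  by_cases hi : i = i0
  · subst hi
    simp [Equiv.swap_apply_right, hz]
  · have hswap : Equiv.swap z i0 i ≠ z := by
      intro hc
      apply hi
      have := congrArg (Equiv.swap z i0) hc
      rwa [Equiv.swap_apply_self, Equiv.swap_apply_left] at this
    have hval : ((Equiv.swap z i0 i : Fin d) : ℕ) ≠ 0 := by
      intro hc
      apply hswap
      apply Fin.ext
      simpa [hz] using hc
    simp only [if_neg hi, if_neg hval]
    unfold eB eZ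
    congr 1

lemma cornerLtr_mem (b : Fin d → Bool) : (fun i => eB h (b i)) ∈ S := by
  classical
  have := edgeLtr_mem h ⟨0, hd0 h⟩ (eB h (b ⟨0, hd0 h⟩)) b
  convert this using 1
  funext i
  by_cases hi : i = (⟨0, hd0 h⟩ : Fin d)
  · subst hi; simp
  · simp [hi]

lemma flip_mem (ε : Fin d → Bool) {k : Fin d → Fin L} (hk : k ∈ S) :
    (fun i => if ε i then (k i).rev else k i) ∈ S := by
  have := h.symm (Equiv.refl _) ε k hk
  simpa using this

end letters

section digits

lemma digits_exist (hL : 1 < L) (q n : ℕ) (a t : ℝ) (h1 : a ≤ t) (h2 : t ≤ a + 1/(L:ℝ)^n) :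
    ∃ v : Fin q → Fin L,
      a + (∑ p : Fin q, (v p : ℝ)/(L:ℝ)^(n+(p:ℕ)+1)) ≤ t ∧
      t ≤ a + (∑ p : Fin q, (v p : ℝ)/(L:ℝ)^(n+(p:ℕ)+1)) + 1/(L:ℝ)^(n+q) := by
  induction q with
  | zero => exact ⟨Fin.elim0, by simpa using h1, by simpa using h2⟩
  | succ q ih =>
    obtain ⟨v, hv1, hv2⟩ := ih
    set a' := a + ∑ p : Fin q, (v p : ℝ)/(L:ℝ)^(n+(p:ℕ)+1) with ha'
    have hpow : (0:ℝ) < (L:ℝ)^(n+q+1) := Lpow_pos hL _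
    have hpow' : (0:ℝ) < (L:ℝ)^(n+q) := Lpow_pos hL _
    set u := (t - a') * (L:ℝ)^(n+q+1) with hu
    have hu0 : 0 ≤ u := mul_nonneg (by linarith) hpow.le
    have huL : u ≤ L := by
      have h3 : t - a' ≤ 1/(L:ℝ)^(n+q) := by linarith
      have : (t - a')*(L:ℝ)^(n+q+1) ≤ (1/(L:ℝ)^(n+q))*(L:ℝ)^(n+q+1) :=
        mul_le_mul_of_nonneg_right h3 hpow.le
      calc u ≤ (1/(L:ℝ)^(n+q))*(L:ℝ)^(n+q+1) := this
        _ = L := by rw [pow_succ]; field_simp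
    have hL0 : 0 < L := by omega
    set c : ℕ := min (L-1) ⌊u⌋₊ with hc
    have hcL : c < L := by omega
    have hcu : (c:ℝ) ≤ u := by
      have h4 : c ≤ ⌊u⌋₊ := min_le_right _ _
      calc (c:ℝ) ≤ (⌊u⌋₊ : ℝ) := by exact_mod_cast h4
        _ ≤ u := Nat.floor_le hu0
    have huc : u ≤ (c:ℝ) + 1 := by
      rcases le_or_gt ⌊u⌋₊ (L-1) with hcase | hcase
      · have : c = ⌊u⌋₊ := by omega
        rw [this]
        exact le_of_lt (Nat.lt_floor_add_one u)
      · have : c = L - 1 := by omega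
        rw [this]
        have : ((L - 1 : ℕ) : ℝ) + 1 = (L:ℝ) := by
          push_cast [Nat.cast_sub (by omega : 1 ≤ L)]
          ring
        rw [this]
        exact huL
    refine ⟨Fin.snoc v ⟨c, hcL⟩, ?_, ?_⟩
    · rw [Fin.sum_univ_castSucc]
      simp only [Fin.snoc_castSucc, Fin.snoc_last, Fin.coe_castSucc, Fin.val_last]
      have : ((c:ℝ))/(L:ℝ)^(n+q+1) ≤ t - a' := by
        rw [div_le_iff₀ hpow]
        calc (c:ℝ) ≤ u := hcu
          _ = (t - a') * (L:ℝ)^(n+q+1) := hu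
      rw [ha'] at this
      push_cast
      linarith
    · rw [Fin.sum_univ_castSucc]
      simp only [Fin.snoc_castSucc, Fin.snoc_last, Fin.coe_castSucc, Fin.val_last]
      have h5 : t - a' ≤ ((c:ℝ) + 1)/(L:ℝ)^(n+q+1) := by
        rw [le_div_iff₀ hpow]
        calc (t - a') * (L:ℝ)^(n+q+1) = u := hu.symm
          _ ≤ (c:ℝ) + 1 := huc
      rw [ha'] at h5
      have he : n + (q+1) = n + q + 1 := by omega
      rw [he]
      push_cast
      have : ((c:ℝ)+1)/(L:ℝ)^(n+q+1) = (c:ℝ)/(L:ℝ)^(n+q+1) + 1/(L:ℝ)^(n+q+1) := by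
        rw [← add_div]
      linarith [this ▸ h5]

lemma sum_geom_shift (hL : 1 < L) (n q : ℕ) :
    ∑ p : Fin q, ((L:ℝ) - 1)/(L:ℝ)^(n+(p:ℕ)+1) = 1/(L:ℝ)^n - 1/(L:ℝ)^(n+q) := by
  have : ∀ p : Fin q, ((L:ℝ) - 1)/(L:ℝ)^(n+(p:ℕ)+1)
      = (1/(L:ℝ)^n) * (((L:ℝ) - 1)/(L:ℝ)^((p:ℕ)+1)) := by
    intro p
    rw [show n+(p:ℕ)+1 = n + ((p:ℕ)+1) by omega, pow_add]
    field_simp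
  rw [Finset.sum_congr rfl (fun p _ => this p), ← Finset.mul_sum, sum_geom hL q, pow_add]
  have hL0 : (L:ℝ) ≠ 0 := ne_of_gt (Lpos hL)
  field_simp

end digits

section edge

variable (h : IsGSC d L S)
include h

lemma eB_val_false : ((eB h false : Fin L) : ℝ) = 0 := by
  unfold eB eZ; simp

lemma eB_val_true : ((eB h true : Fin L) : ℝ) = (L:ℝ) - 1 := by
  unfold eB eZ
  simp only [if_true]
  rw [Fin.val_rev]
  push_cast [Nat.cast_sub (by have := h.hL; omega : 0 + 1 ≤ L)]
  ring

/-- Any point on an (axis-`i0`) edge of an admissible cell lies in every `F_m`. -/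
lemma edge_mem {n : ℕ} {w : Fin n → (Fin d → Fin L)} (hw : ∀ q, w q ∈ S)
    (i0 : Fin d) (b : Fin d → Bool) (x : EuclideanSpace ℝ (Fin d))
    (hxo : ∀ i, i ≠ i0 → x i = wbase L w i + (if b i then 1/(L:ℝ)^n else 0))
    (hxi1 : wbase L w i0 ≤ x i0) (hxi2 : x i0 ≤ wbase L w i0 + 1/(L:ℝ)^n) :
    ∀ m, x ∈ approxSet d L S m := by
  classical
  have hL := hL1' h
  intro m
  rcases le_or_gt m n with hm | hm
  · refine cell_subset_approx hL w hw m hm ?_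
    rw [mem_wordCell_iff]
    intro i
    by_cases hi : i = i0
    · subst hi; exact ⟨hxi1, hxi2⟩
    · rw [hxo i hi]
      have hpos : (0:ℝ) ≤ 1/(L:ℝ)^n := by positivity
      by_cases hb : b i <;> simp [hb] <;> positivity
  · -- m > n : extend the word
    set q := m - n with hq
    obtain ⟨v, hv1, hv2⟩ := digits_exist hL q n (wbase L w i0) (x i0) hxi1 hxi2
    set ext : Fin q → (Fin d → Fin L) := fun p => (fun i => if i = i0 then v p else eB h (b i))
      with hext
    set w' : Fin (n+q) → (Fin d → Fin L) := Fin.append w ext with hw'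
    have hadm : ∀ r, w' r ∈ S := by
      intro r
      refine Fin.addCases (fun r' => ?_) (fun r' => ?_) r
      · rw [hw', Fin.append_left]; exact hw r'
      · rw [hw', Fin.append_right]; exact edgeLtr_mem h i0 (v r') b
    have hbase : ∀ i, wbase L w' i = wbase L w i + ∑ p : Fin q, ((ext p i : ℕ) : ℝ)/(L:ℝ)^(n+(p:ℕ)+1) := by
      intro i
      unfold wbase
      rw [Fin.sum_univ_add]
      congr 1
      · apply Finset.sum_congr rfl
        intro p _
        rw [hw', Fin.append_left, Fin.coe_castAdd]
      · apply Finset.sum_congr rfl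
        intro p _
        rw [hw', Fin.append_right, Fin.coe_natAdd]
    have hmem : x ∈ wordCell d L w' := by
      rw [mem_wordCell_iff]
      intro i
      by_cases hi : i = i0
      · subst hi
        rw [hbase]
        have hei : ∀ p : Fin q, ((ext p i : ℕ) : ℝ) = (v p : ℝ) := by
          intro p; rw [hext]; simp
        rw [Finset.sum_congr rfl (fun p _ => by rw [hei p])]
        exact ⟨hv1, hv2⟩
      · rw [hbase, hxo i hi]
        have hei : ∀ p : Fin q, ((ext p i : ℕ) : ℝ) = if b i then (L:ℝ) - 1 else 0 := by
          intro p
          rw [hext]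
          simp only [if_neg hi]
          by_cases hb : b i
          · rw [hb, if_pos rfl]; exact eB_val_true h
          · rw [eq_false_of_ne_true hb, if_neg (by simp)]; exact eB_val_false h
        rw [Finset.sum_congr rfl (fun p _ => by rw [hei p])]
        have hpq : (0:ℝ) < 1/(L:ℝ)^(n+q) := by positivity
        by_cases hb : b i
        · rw [if_pos hb, if_pos hb]
          rw [Finset.sum_congr rfl (fun p _ => rfl), sum_geom_shift hL n q]
          constructor <;> linarith
        · rw [if_neg hb, if_neg hb]
          simp only [Finset.sum_const, nsmul_eq_mul]
          constructor <;> simp <;> positivity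
    have := mem_approxSet_of hadm hmem
    have heq : n + q = m := by omega
    rwa [heq] at this

end edge

section corners

/-- corner of a cell specified by a bit vector -/
def cornerPt (L : ℕ) {d n : ℕ} (w : Fin n → (Fin d → Fin L)) (b : Fin d → Bool) :
    EuclideanSpace ℝ (Fin d) :=
  WithLp.toLp 2 (fun i => wbase L w i + if b i then 1/(L:ℝ)^n else 0)

lemma cornerPt_apply {n : ℕ} (w : Fin n → (Fin d → Fin L)) (b : Fin d → Bool) (i : Fin d) :
    cornerPt L w b i = wbase L w i + if b i then 1/(L:ℝ)^n else 0 := rfl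

lemma cornerPt_coord_bounds {n : ℕ} (w : Fin n → (Fin d → Fin L)) (b : Fin d → Bool) (i : Fin d) :
    wbase L w i ≤ cornerPt L w b i ∧ cornerPt L w b i ≤ wbase L w i + 1/(L:ℝ)^n := by
  rw [cornerPt_apply]
  have hpos : (0:ℝ) ≤ 1/(L:ℝ)^n := by positivity
  by_cases hb : b i <;> simp [hb] <;> positivity

variable (h : IsGSC d L S)
include h

lemma cornerPt_mem_cell {n : ℕ} (w : Fin n → (Fin d → Fin L)) (b : Fin d → Bool) :
    cornerPt L w b ∈ wordCell d L w :=
  mem_wordCell_iff.mpr (cornerPt_coord_bounds w b)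

lemma cornerPt_mem_approx {n : ℕ} {w : Fin n → (Fin d → Fin L)} (hw : ∀ q, w q ∈ S)
    (b : Fin d → Bool) (m : ℕ) : cornerPt L w b ∈ approxSet d L S m := by
  apply edge_mem h hw ⟨0, hd0 h⟩ b _ (fun i _ => rfl)
    (cornerPt_coord_bounds w b _).1 (cornerPt_coord_bounds w b _).2

lemma cornerPt_mem_carpet {n : ℕ} {w : Fin n → (Fin d → Fin L)} (hw : ∀ q, w q ∈ S)
    (b : Fin d → Bool) : cornerPt L w b ∈ carpetSet d L S :=
  Set.mem_iInter.mpr (cornerPt_mem_approx h hw b)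

lemma segment_edge_subset_carpet {n : ℕ} {w : Fin n → (Fin d → Fin L)} (hw : ∀ q, w q ∈ S)
    (i0 : Fin d) (b b' : Fin d → Bool) (hbb : ∀ i, i ≠ i0 → b i = b' i) :
    segment ℝ (cornerPt L w b) (cornerPt L w b') ⊆ carpetSet d L S := by
  intro z hz
  obtain ⟨a, c, ha, hc, hac, rfl⟩ := hz
  have hco : ∀ i, (a • cornerPt L w b + c • cornerPt L w b' : EuclideanSpace ℝ (Fin d)) i
      = a * cornerPt L w b i + c * cornerPt L w b' i := fun i => rfl
  have e1 : ∀ v : ℝ, a * v + c * v = v := by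
    intro v; rw [← add_mul, hac, one_mul]
  apply Set.mem_iInter.mpr
  intro m
  apply edge_mem h hw i0 b _ ?_ ?_ ?_ m
  · intro i hi
    rw [hco i, cornerPt_apply, cornerPt_apply, ← hbb i hi, e1]
  · rw [hco i0]
    have h1 := (cornerPt_coord_bounds w b i0).1
    have h2 := (cornerPt_coord_bounds w b' i0).1
    calc wbase L w i0 = a * wbase L w i0 + c * wbase L w i0 := (e1 _).symm
      _ ≤ _ := add_le_add (mul_le_mul_of_nonneg_left h1 ha) (mul_le_mul_of_nonneg_left h2 hc)
  · rw [hco i0]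
    have h1 := (cornerPt_coord_bounds w b i0).2
    have h2 := (cornerPt_coord_bounds w b' i0).2
    calc a * cornerPt L w b i0 + c * cornerPt L w b' i0
        ≤ a * (wbase L w i0 + 1/(L:ℝ)^n) + c * (wbase L w i0 + 1/(L:ℝ)^n) :=
          add_le_add (mul_le_mul_of_nonneg_left h1 ha) (mul_le_mul_of_nonneg_left h2 hc)
      _ = wbase L w i0 + 1/(L:ℝ)^n := e1 _

lemma joinedIn_segment {s : Set (EuclideanSpace ℝ (Fin d))} (x y : EuclideanSpace ℝ (Fin d))
    (hs : segment ℝ x y ⊆ s) : JoinedIn s x y := by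
  have hpc : IsPathConnected (segment ℝ x y) :=
    (convex_segment x y).isPathConnected ⟨x, left_mem_segment ℝ x y⟩
  exact (hpc.joinedIn x (left_mem_segment ℝ x y) y (right_mem_segment ℝ x y)).mono hs

lemma corners_joined {n : ℕ} {w : Fin n → (Fin d → Fin L)} (hw : ∀ q, w q ∈ S)
    (b b' : Fin d → Bool) :
    JoinedIn (carpetSet d L S ∩ wordCell d L w) (cornerPt L w b) (cornerPt L w b') := by
  classical
  have main : ∀ (T : Finset (Fin d)) (b b' : Fin d → Bool), (∀ i ∉ T, b i = b' i) →
      JoinedIn (carpetSet d L S ∩ wordCell d L w) (cornerPt L w b) (cornerPt L w b') := by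
    intro T
    induction T using Finset.induction with
    | empty =>
      intro b b' hbb
      have : b = b' := funext fun i => hbb i (Finset.notMem_empty i)
      subst this
      exact JoinedIn.refl ⟨cornerPt_mem_carpet h hw b, cornerPt_mem_cell h w b⟩
    | @insert i0 T hi0 ih =>
      intro b b' hbb
      set b'' := Function.update b i0 (b' i0) with hb''
      have step1 : JoinedIn (carpetSet d L S ∩ wordCell d L w)
          (cornerPt L w b) (cornerPt L w b'') := by
        apply joinedIn_segment h
        apply Set.subset_inter
        · apply segment_edge_subset_carpet h hw i0 b b''
          intro i hi
          rw [hb'', Function.update_of_ne hi]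
        · exact (convex_wordCell w).segment_subset (cornerPt_mem_cell h w b)
            (cornerPt_mem_cell h w b'')
      refine step1.trans (ih b'' b' ?_)
      intro i hi
      by_cases hii : i = i0
      · subst hii; rw [hb'', Function.update_self]
      · rw [hb'', Function.update_of_ne hii]
        exact hbb i (by simp [hii, hi])
  exact main Finset.univ b b' (fun i hi => absurd (Finset.mem_univ i) hi)

end corners

section graph

/-- Two letters whose cells touch. -/
def Touch {d L : ℕ} (k k' : Fin d → Fin L) : Prop :=
  ∀ i, ((k i : ℤ) - (k' i : ℤ)).natAbs ≤ 1

def SRel (S : Set (Fin d → Fin L)) (a b : Fin d → Fin L) : Prop :=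
  a ∈ S ∧ b ∈ S ∧ Touch a b

def oneCell (d L : ℕ) (a : Fin d → Fin L) : Set (EuclideanSpace ℝ (Fin d)) :=
  wordCell d L (fun _ : Fin 1 => a)

lemma mem_oneCell_iff {a : Fin d → Fin L} {x : EuclideanSpace ℝ (Fin d)} :
    x ∈ oneCell d L a ↔ ∀ i, (a i : ℝ)/(L:ℝ) ≤ x i ∧ x i ≤ (a i : ℝ)/(L:ℝ) + 1/(L:ℝ) := by
  unfold oneCell
  rw [mem_wordCell_iff]
  constructor <;> intro hx i <;> have := hx i <;>
    simpa [wbase, Fin.sum_univ_one] using this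

lemma approx_one_eq : approxSet d L S 1 = ⋃ a ∈ S, oneCell d L a := by
  ext x
  constructor
  · intro hx
    obtain ⟨w, hw, hxw⟩ := Set.mem_iUnion₂.mp hx
    refine Set.mem_biUnion (hw 0) ?_
    have : (fun _ : Fin 1 => w 0) = w := funext fun q => by
      rw [Subsingleton.elim (0 : Fin 1) q]
    unfold oneCell
    rw [this]
    exact hxw
  · intro hx
    obtain ⟨a, ha, hxa⟩ := Set.mem_iUnion₂.mp hx
    exact Set.mem_biUnion (fun _ : Fin 1 => ha : ∀ q : Fin 1, (fun _ : Fin 1 => a) q ∈ S) hxa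

lemma touch_of_cells_intersect (hL : 1 < L) {a b : Fin d → Fin L}
    {x : EuclideanSpace ℝ (Fin d)} (hxa : x ∈ oneCell d L a) (hxb : x ∈ oneCell d L b) :
    Touch a b := by
  intro i
  obtain ⟨ha1, ha2⟩ := mem_oneCell_iff.mp hxa i
  obtain ⟨hb1, hb2⟩ := mem_oneCell_iff.mp hxb i
  have hLpos : (0:ℝ) < (L:ℝ) := Lpos hL
  have h1 : ((a i : ℕ) : ℝ) ≤ ((b i : ℕ) : ℝ) + 1 := by
    have h0 : (a i : ℝ)/(L:ℝ) ≤ (b i : ℝ)/(L:ℝ) + 1/(L:ℝ) := le_trans ha1 hb2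
    rw [← add_div] at h0
    exact (div_le_div_iff_of_pos_right hLpos).mp h0
  have h2 : ((b i : ℕ) : ℝ) ≤ ((a i : ℕ) : ℝ) + 1 := by
    have h0 : (b i : ℝ)/(L:ℝ) ≤ (a i : ℝ)/(L:ℝ) + 1/(L:ℝ) := le_trans hb1 ha2
    rw [← add_div] at h0
    exact (div_le_div_iff_of_pos_right hLpos).mp h0
  have h1' : (a i : ℕ) ≤ (b i : ℕ) + 1 := by exact_mod_cast h1
  have h2' : (b i : ℕ) ≤ (a i : ℕ) + 1 := by exact_mod_cast h2
  omega

def openCell (d L : ℕ) (a : Fin d → Fin L) : Set (EuclideanSpace ℝ (Fin d)) :=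
  {x | ∀ i, (a i : ℝ)/(L:ℝ) < x i ∧ x i < (a i : ℝ)/(L:ℝ) + 1/(L:ℝ)}

lemma isOpen_openCell (a : Fin d → Fin L) : IsOpen (openCell d L a) := by
  have : openCell d L a = ⋂ i : Fin d,
      ({x : EuclideanSpace ℝ (Fin d) | (a i : ℝ)/(L:ℝ) < x i} ∩
       {x : EuclideanSpace ℝ (Fin d) | x i < (a i : ℝ)/(L:ℝ) + 1/(L:ℝ)}) := by
    ext x; simp only [Set.mem_iInter, Set.mem_inter_iff, Set.mem_setOf_eq]; exact Iff.rfl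
  rw [this]
  apply isOpen_iInter_of_finite
  intro i
  exact (isOpen_lt continuous_const (continuous_coord i)).inter
    (isOpen_lt (continuous_coord i) continuous_const)

lemma openCell_nonempty (hL : 1 < L) (a : Fin d → Fin L) : (openCell d L a).Nonempty := by
  refine ⟨WithLp.toLp 2 (fun i => (a i : ℝ)/(L:ℝ) + 1/(2*(L:ℝ)) : (Fin d) → ℝ), ?_⟩
  intro i
  have hLpos : (0:ℝ) < (L:ℝ) := Lpos hL
  constructor
  · have : (0:ℝ) < 1/(2*(L:ℝ)) := by positivity
    linarith
  · have : 1/(2*(L:ℝ)) < 1/(L:ℝ) := by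
      rw [div_lt_div_iff₀ (by positivity) hLpos]
      linarith
    linarith

lemma openCell_subset (a : Fin d → Fin L) : openCell d L a ⊆ oneCell d L a := by
  intro x hx
  rw [mem_oneCell_iff]
  exact fun i => ⟨(hx i).1.le, (hx i).2.le⟩

variable (h : IsGSC d L S)
include h

lemma graph_connected {k k' : Fin d → Fin L} (hk : k ∈ S) (hk' : k' ∈ S) :
    Relation.ReflTransGen (SRel S) k k' := by
  classical
  by_contra hcon
  have hL : 1 < L := hL1' h
  set A : Set (Fin d → Fin L) := {a | a ∈ S ∧ Relation.ReflTransGen (SRel S) k a} with hA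
  set U : Set (EuclideanSpace ℝ (Fin d)) := ⋃ a ∈ A, oneCell d L a with hU
  set V : Set (EuclideanSpace ℝ (Fin d)) := ⋃ a ∈ S \ A, oneCell d L a with hV
  have hcover : approxSet d L S 1 = U ∪ V := by
    rw [approx_one_eq, hU, hV]
    ext x
    simp only [Set.mem_iUnion, Set.mem_union, Set.mem_diff]
    constructor
    · rintro ⟨a, ha, hxa⟩
      by_cases haA : a ∈ A
      · exact Or.inl ⟨a, haA, hxa⟩
      · exact Or.inr ⟨a, ⟨ha, haA⟩, hxa⟩
    · rintro (⟨a, ha, hxa⟩ | ⟨a, ha, hxa⟩)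
      · exact ⟨a, ha.1, hxa⟩
      · exact ⟨a, ha.1, hxa⟩
  have hdisj : U ∩ V = ∅ := by
    rw [Set.eq_empty_iff_forall_notMem]
    rintro x ⟨hxU, hxV⟩
    obtain ⟨a, haA, hxa⟩ := Set.mem_iUnion₂.mp hxU
    obtain ⟨b, hbB, hxb⟩ := Set.mem_iUnion₂.mp hxV
    have htouch := touch_of_cells_intersect hL hxa hxb
    exact hbB.2 ⟨hbB.1, haA.2.tail ⟨haA.1, hbB.1, htouch⟩⟩
  have hUc : IsClosed U := Set.Finite.isClosed_biUnion (Set.toFinite _)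
    (fun a _ => isClosed_wordCell _)
  have hVc : IsClosed V := Set.Finite.isClosed_biUnion (Set.toFinite _)
    (fun a _ => isClosed_wordCell _)
  obtain ⟨hne, hpre⟩ := h.conn
  have hsub : interior (approxSet d L S 1) ⊆ Vᶜ ∪ Uᶜ := by
    intro x hx
    have : x ∈ U ∪ V := hcover ▸ interior_subset hx
    rcases this with hx' | hx'
    · left; intro hc; exact Set.eq_empty_iff_forall_notMem.mp hdisj x ⟨hx', hc⟩
    · right; intro hc; exact Set.eq_empty_iff_forall_notMem.mp hdisj x ⟨hc, hx'⟩
  have hint : ∀ a ∈ S, openCell d L a ⊆ interior (approxSet d L S 1) := by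
    intro a ha
    apply interior_maximal _ (isOpen_openCell a)
    refine (openCell_subset a).trans ?_
    rw [approx_one_eq]
    exact Set.subset_biUnion_of_mem ha
  have hne1 : (interior (approxSet d L S 1) ∩ Vᶜ).Nonempty := by
    obtain ⟨x, hx⟩ := openCell_nonempty hL (d := d) k
    refine ⟨x, hint k hk hx, ?_⟩
    intro hc
    have hxU : x ∈ U := Set.mem_biUnion (⟨hk, Relation.ReflTransGen.refl⟩ : k ∈ A)
      (openCell_subset k hx)
    exact Set.eq_empty_iff_forall_notMem.mp hdisj x ⟨hxU, hc⟩
  have hne2 : (interior (approxSet d L S 1) ∩ Uᶜ).Nonempty := by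
    obtain ⟨x, hx⟩ := openCell_nonempty hL (d := d) k'
    refine ⟨x, hint k' hk' hx, ?_⟩
    intro hc
    have hxV : x ∈ V := Set.mem_biUnion (⟨hk', fun hc' => hcon hc'.2⟩ : k' ∈ S \ A)
      (openCell_subset k' hx)
    exact Set.eq_empty_iff_forall_notMem.mp hdisj x ⟨hc, hxV⟩
  obtain ⟨x, hxI, hxV, hxU⟩ := hpre Vᶜ Uᶜ hVc.isOpen_compl hUc.isOpen_compl hsub hne1 hne2
  have : x ∈ U ∪ V := hcover ▸ interior_subset hxI
  rcases this with hx' | hx' <;> [exact hxU hx'; exact hxV hx']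

end graph

section joins

variable (h : IsGSC d L S)
include h

/-- the all-zero letter -/
def zLtr (hh : IsGSC d L S) : Fin d → Fin L := fun _ => eB hh false

lemma zLtr_mem : zLtr h ∈ S := cornerLtr_mem h (fun _ => false)

lemma zLtr_val (i : Fin d) : ((zLtr h i : ℕ) : ℝ) = 0 := by
  unfold zLtr
  rw [eB_val_false h]

lemma snoc_zero_base {n : ℕ} (w : Fin n → (Fin d → Fin L)) :
    cornerPt L (Fin.snoc w (zLtr h) : Fin (n+1) → (Fin d → Fin L)) (fun _ => false)
      = cornerPt L w (fun _ => false) := by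
  ext i
  rw [cornerPt_apply, cornerPt_apply, wbase_snoc, zLtr_val h]
  simp

lemma snoc_comp_castSucc {n : ℕ} (w : Fin n → (Fin d → Fin L)) (k : Fin d → Fin L) :
    (Fin.snoc w k : Fin (n+1) → (Fin d → Fin L)) ∘ Fin.castSucc = w :=
  funext fun q => by simp

lemma touching_bases_joined {n : ℕ} {w : Fin n → (Fin d → Fin L)} (hw : ∀ q, w q ∈ S)
    {k k' : Fin d → Fin L} (hk : k ∈ S) (hk' : k' ∈ S) (ht : Touch k k') :
    JoinedIn (carpetSet d L S ∩ wordCell d L w)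
      (cornerPt L (Fin.snoc w k : Fin (n+1) → _) (fun _ => false))
      (cornerPt L (Fin.snoc w k' : Fin (n+1) → _) (fun _ => false)) := by
  classical
  have hL : 1 < L := hL1' h
  set b1 : Fin d → Bool := fun i => decide ((k i : ℕ) < (k' i : ℕ)) with hb1
  set b2 : Fin d → Bool := fun i => decide ((k' i : ℕ) < (k i : ℕ)) with hb2
  have hshared : cornerPt L (Fin.snoc w k : Fin (n+1) → _) b1
      = cornerPt L (Fin.snoc w k' : Fin (n+1) → _) b2 := by
    ext i
    rw [cornerPt_apply, cornerPt_apply, wbase_snoc, wbase_snoc]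
    have hbound : (k i : ℕ) ≤ (k' i : ℕ) + 1 ∧ (k' i : ℕ) ≤ (k i : ℕ) + 1 := by
      have := ht i; omega
    have key : ((k i : ℕ) : ℝ) + (if b1 i then 1 else 0)
        = ((k' i : ℕ) : ℝ) + (if b2 i then 1 else 0) := by
      rcases Nat.lt_trichotomy (k i : ℕ) (k' i : ℕ) with hlt | heq | hgt
      · have he : (k' i : ℕ) = (k i : ℕ) + 1 := by omega
        rw [hb1, hb2]
        simp only [decide_eq_true_eq, if_pos hlt, if_neg (by omega : ¬ ((k' i : ℕ) < (k i : ℕ)))]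
        rw [add_zero]
        exact_mod_cast (by omega : (k i : ℕ) + 1 = (k' i : ℕ))
      · rw [hb1, hb2]
        simp only [decide_eq_true_eq, if_neg (by omega : ¬ ((k i : ℕ) < (k' i : ℕ))),
          if_neg (by omega : ¬ ((k' i : ℕ) < (k i : ℕ)))]
        rw [add_zero, add_zero]
        exact_mod_cast heq
      · have he : (k i : ℕ) = (k' i : ℕ) + 1 := by omega
        rw [hb1, hb2]
        simp only [decide_eq_true_eq, if_neg (by omega : ¬ ((k i : ℕ) < (k' i : ℕ))), if_pos hgt]
        rw [add_zero]
        exact_mod_cast (by omega : (k i : ℕ) = (k' i : ℕ) + 1)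
    have hpow : (0:ℝ) < (L:ℝ)^(n+1) := Lpow_pos hL _
    have expand : ∀ (c : Fin L) (bb : Bool), (c : ℝ)/(L:ℝ)^(n+1) + (if bb then 1/(L:ℝ)^(n+1) else 0)
        = ((c : ℝ) + (if bb then 1 else 0))/(L:ℝ)^(n+1) := by
      intro c bb
      by_cases hbb : bb <;> simp [hbb, add_div]
    rw [add_assoc, add_assoc, expand, expand, key]
  have hsub1 : carpetSet d L S ∩ wordCell d L (Fin.snoc w k : Fin (n+1) → _)
      ⊆ carpetSet d L S ∩ wordCell d L w := by
    apply Set.inter_subset_inter_right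
    have := wordCell_subset_dropLast hL (Fin.snoc w k : Fin (n+1) → _)
    rwa [snoc_comp_castSucc h] at this
  have hsub2 : carpetSet d L S ∩ wordCell d L (Fin.snoc w k' : Fin (n+1) → _)
      ⊆ carpetSet d L S ∩ wordCell d L w := by
    apply Set.inter_subset_inter_right
    have := wordCell_subset_dropLast hL (Fin.snoc w k' : Fin (n+1) → _)
    rwa [snoc_comp_castSucc h] at this
  have hadm1 : ∀ q, (Fin.snoc w k : Fin (n+1) → _) q ∈ S := by
    intro q
    refine Fin.lastCases ?_ (fun q' => ?_) q
    · rw [Fin.snoc_last]; exact hk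
    · rw [Fin.snoc_castSucc]; exact hw q'
  have hadm2 : ∀ q, (Fin.snoc w k' : Fin (n+1) → _) q ∈ S := by
    intro q
    refine Fin.lastCases ?_ (fun q' => ?_) q
    · rw [Fin.snoc_last]; exact hk'
    · rw [Fin.snoc_castSucc]; exact hw q'
  have j1 := (corners_joined h hadm1 (fun _ => false) b1).mono hsub1
  have j2 := (corners_joined h hadm2 b2 (fun _ => false)).mono hsub2
  rw [hshared] at j1
  exact j1.trans j2

lemma snoc_joined {n : ℕ} {w : Fin n → (Fin d → Fin L)} (hw : ∀ q, w q ∈ S)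
    {k : Fin d → Fin L} (hk : k ∈ S) :
    JoinedIn (carpetSet d L S ∩ wordCell d L w)
      (cornerPt L w (fun _ => false))
      (cornerPt L (Fin.snoc w k : Fin (n+1) → _) (fun _ => false)) := by
  have hrtg := graph_connected h (zLtr_mem h) hk
  clear hk
  induction hrtg with
  | refl =>
    rw [snoc_zero_base h w]
    exact JoinedIn.refl ⟨cornerPt_mem_carpet h hw _, cornerPt_mem_cell h w _⟩
  | @tail b c hab hbc ih =>
    have hb : b ∈ S := hbc.1
    have hc : c ∈ S := hbc.2.1
    exact ih.trans (touching_bases_joined h hw hb hc hbc.2.2)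

lemma base_joined : ∀ {n : ℕ} (w : Fin n → (Fin d → Fin L)), (∀ q, w q ∈ S) →
    JoinedIn (carpetSet d L S) (cornerPt L w (fun _ => false))
      (cornerPt L (Fin.elim0 : Fin 0 → (Fin d → Fin L)) (fun _ => false)) := by
  intro n
  induction n with
  | zero =>
    intro w hw
    have : w = Fin.elim0 := funext fun q => q.elim0
    subst this
    exact JoinedIn.refl (cornerPt_mem_carpet h (fun q => q.elim0) _)
  | succ n ih =>
    intro w hw
    have hsnoc : w = Fin.snoc (w ∘ Fin.castSucc) (w (Fin.last n)) := by
      funext q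
      refine Fin.lastCases ?_ (fun q' => ?_) q
      · rw [Fin.snoc_last]
      · rw [Fin.snoc_castSucc]; rfl
    have hw' : ∀ q, (w ∘ Fin.castSucc) q ∈ S := fun q => hw _
    have hj := (snoc_joined h hw' (hw (Fin.last n))).mono
      (Set.inter_subset_left)
    rw [← hsnoc] at hj
    exact hj.symm.trans (ih (w ∘ Fin.castSucc) hw')

end joins

section koenig

variable (h : IsGSC d L S)
include h

lemma exists_address {x : EuclideanSpace ℝ (Fin d)} (hx : x ∈ carpetSet d L S) :
    ∃ f : ℕ → (Fin d → Fin L), (∀ q : ℕ, f q ∈ S) ∧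
      ∀ n : ℕ, x ∈ wordCell d L (fun q : Fin n => f (q : ℕ)) := by
  classical
  set C : ℕ → Set (ℕ → (Fin d → Fin L)) := fun n =>
    {f | (∀ q : Fin n, f (q : ℕ) ∈ S) ∧ x ∈ wordCell d L (fun q : Fin n => f (q : ℕ))} with hC
  have hmono : ∀ n, C (n+1) ⊆ C n := by
    intro n f hf
    constructor
    · intro q
      exact hf.1 ⟨(q : ℕ), by omega⟩
    · have hsub := wordCell_subset_dropLast (hL1' h) (fun q : Fin (n+1) => f (q : ℕ))
      have hcomp : ((fun q : Fin (n+1) => f (q : ℕ)) ∘ Fin.castSucc) = fun q : Fin n => f (q : ℕ) := by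
        funext q; simp
      rw [hcomp] at hsub
      exact hsub hf.2
  have hne : ∀ n, (C n).Nonempty := by
    intro n
    have hxn : x ∈ approxSet d L S n := Set.mem_iInter.mp hx n
    obtain ⟨w, hw, hxw⟩ := Set.mem_iUnion₂.mp hxn
    refine ⟨fun q => if hq : q < n then w ⟨q, hq⟩ else zLtr h, ?_, ?_⟩
    · intro q
      show (if hq : (q:ℕ) < n then w ⟨(q:ℕ), hq⟩ else zLtr h) ∈ S
      rw [dif_pos q.isLt]
      exact hw _
    · have : (fun q : Fin n => if hq : (q:ℕ) < n then w ⟨(q:ℕ), hq⟩ else zLtr h) = w := by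
        funext q
        rw [dif_pos q.isLt]
      rw [this]
      exact hxw
  have hclosed : ∀ n, IsClosed (C n) := by
    intro n
    have : C n = (fun (f : ℕ → (Fin d → Fin L)) (q : Fin n) => f (q : ℕ)) ⁻¹'
        {w : Fin n → (Fin d → Fin L) | (∀ q, w q ∈ S) ∧ x ∈ wordCell d L w} := rfl
    rw [this]
    have hcont : Continuous (fun (f : ℕ → (Fin d → Fin L)) => (fun q : Fin n => f (q : ℕ))) :=
      continuous_pi (fun q => continuous_apply ((q : ℕ)))
    exact IsClosed.preimage hcont (isClosed_discrete _)
  have hcompact : IsCompact (C 0) := (hclosed 0).isCompact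
  obtain ⟨f, hf⟩ := IsCompact.nonempty_iInter_of_sequence_nonempty_isCompact_isClosed
    C hmono hne hcompact hclosed
  have hfC : ∀ n, f ∈ C n := Set.mem_iInter.mp hf
  refine ⟨f, ?_, ?_⟩
  · intro q
    exact (hfC (q+1)).1 ⟨q, by omega⟩
  · intro n
    exact (hfC n).2

lemma norm_sub_le_of_cell (hd : 1 ≤ d) {n : ℕ} {w : Fin n → (Fin d → Fin L)}
    {y z : EuclideanSpace ℝ (Fin d)} (hy : y ∈ wordCell d L w) (hz : z ∈ wordCell d L w) :
    ‖y - z‖ ≤ (d:ℝ) * (1/(L:ℝ))^n := by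
  have hb : (0:ℝ) ≤ 1/(L:ℝ)^n := by positivity
  have hcoord : ∀ i, |y i - z i| ≤ 1/(L:ℝ)^n := by
    intro i
    obtain ⟨hy1, hy2⟩ := mem_wordCell_iff.mp hy i
    obtain ⟨hz1, hz2⟩ := mem_wordCell_iff.mp hz i
    rw [abs_le]
    constructor <;> linarith
  rw [EuclideanSpace.norm_eq]
  have heval : ∀ i, ‖(y - z : EuclideanSpace ℝ (Fin d)) i‖ = |y i - z i| := fun i => rfl
  have hsum : ∑ i : Fin d, ‖(y - z : EuclideanSpace ℝ (Fin d)) i‖^2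
      ≤ ((d:ℝ) * (1/(L:ℝ)^n))^2 := by
    have hbd : ∀ i : Fin d, ‖(y - z : EuclideanSpace ℝ (Fin d)) i‖^2 ≤ (1/(L:ℝ)^n)^2 := by
      intro i
      rw [heval i]
      rw [sq_abs]
      apply sq_le_sq'
      · linarith [(abs_le.mp (hcoord i)).1]
      · linarith [(abs_le.mp (hcoord i)).2]
    calc ∑ i : Fin d, ‖(y - z : EuclideanSpace ℝ (Fin d)) i‖^2
        ≤ ∑ _i : Fin d, (1/(L:ℝ)^n)^2 := Finset.sum_le_sum (fun i _ => hbd i)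
      _ = (d:ℝ) * (1/(L:ℝ)^n)^2 := by
          rw [Finset.sum_const, Finset.card_univ, Fintype.card_fin, nsmul_eq_mul]
      _ ≤ ((d:ℝ) * (1/(L:ℝ)^n))^2 := by
          have hd1 : (1:ℝ) ≤ (d:ℝ) := by exact_mod_cast hd
          rw [mul_pow]
          nlinarith [mul_le_mul_of_nonneg_right (by nlinarith : (d:ℝ) ≤ (d:ℝ)^2)
            (sq_nonneg (1/(L:ℝ)^n))]
  calc √(∑ i : Fin d, ‖(y - z : EuclideanSpace ℝ (Fin d)) i‖^2)
      ≤ √(((d:ℝ) * (1/(L:ℝ)^n))^2) := Real.sqrt_le_sqrt hsum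
    _ = (d:ℝ) * (1/(L:ℝ)^n) := Real.sqrt_sq (by positivity)
    _ = (d:ℝ) * (1/(L:ℝ))^n := by rw [one_div, one_div, inv_pow]

/-- The origin corner point. -/
def originPt (d L : ℕ) : EuclideanSpace ℝ (Fin d) :=
  cornerPt L (Fin.elim0 : Fin 0 → (Fin d → Fin L)) (fun _ => false)

lemma originPt_mem_carpet : originPt d L ∈ carpetSet d L S :=
  cornerPt_mem_carpet h (fun q => q.elim0) _

lemma carpet_joined {x : EuclideanSpace ℝ (Fin d)} (hx : x ∈ carpetSet d L S) :
    JoinedIn (carpetSet d L S) x (originPt d L) := by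
  classical
  have hL : 1 < L := hL1' h
  have hLR : (1:ℝ) < (L:ℝ) := by exact_mod_cast hL
  obtain ⟨f, hfS, hfcell⟩ := exists_address h hx
  set w : ∀ n : ℕ, (Fin n → (Fin d → Fin L)) := fun n (q : Fin n) => f (q : ℕ) with hwdef
  have hadm : ∀ n, ∀ q : Fin n, w n q ∈ S := fun n q => hfS _
  set c : ℕ → EuclideanSpace ℝ (Fin d) := fun n => cornerPt L (w n) (fun _ => false) with hcdef
  have hsnocw : ∀ n, (Fin.snoc (w n) (f n) : Fin (n+1) → (Fin d → Fin L)) = w (n+1) := by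
    intro n
    funext q
    refine Fin.lastCases ?_ (fun q' => ?_) q
    · rw [Fin.snoc_last]; rfl
    · rw [Fin.snoc_castSucc]; rfl
  have hjoin : ∀ n, JoinedIn (carpetSet d L S ∩ wordCell d L (w n)) (c n) (c (n+1)) := by
    intro n
    have := snoc_joined h (hadm n) (hfS n)
    rwa [hsnocw n] at this
  have hcmem : ∀ n, c n ∈ wordCell d L (w n) := fun n => cornerPt_mem_cell h (w n) _
  have hgeo : Summable (fun n => (d:ℝ) * (1/(L:ℝ))^n) := by
    apply Summable.mul_left
    apply summable_geometric_of_lt_one (by positivity)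
    rw [div_lt_one (by linarith)]
    linarith
  have hbound : ∀ n, dist (c n) x ≤ (d:ℝ) * (1/(L:ℝ))^n := by
    intro n
    rw [dist_eq_norm]
    exact norm_sub_le_of_cell h (by have := h.hd; omega) (hcmem n) (hfcell n)
  have hgeo0 : Tendsto (fun n : ℕ => (d:ℝ) * (1/(L:ℝ))^n) atTop (nhds 0) := by
    have h0 : Tendsto (fun n : ℕ => (1/(L:ℝ))^n) atTop (nhds 0) := by
      apply tendsto_pow_atTop_nhds_zero_of_lt_one (by positivity)
      rw [div_lt_one (by linarith)]; linarith
    simpa using h0.const_mul (d:ℝ)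
  have htend : Tendsto c atTop (nhds x) := by
    rw [tendsto_iff_dist_tendsto_zero]
    exact squeeze_zero (fun n => dist_nonneg) hbound hgeo0
  have hjoined : JoinedIn (carpetSet d L S) (c 0) x := by
    refine joinedIn_of_chain (isClosed_carpetSet) c x htend (fun n => (d:ℝ) * (1/(L:ℝ))^n) hgeo
      (fun n => (hjoin n).somePath) ?_ ?_
    · intro n t
      exact ((hjoin n).somePath_mem t).1
    · intro n t
      have hmem := ((hjoin n).somePath_mem t).2
      exact norm_sub_le_of_cell h (by have := h.hd; omega) hmem (hcmem n)
  have hw0 : w 0 = (Fin.elim0 : Fin 0 → (Fin d → Fin L)) := funext fun q => q.elim0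
  have hc0 : c 0 = originPt d L := by
    show cornerPt L (w 0) (fun _ => false) = originPt d L
    unfold originPt
    rw [hw0]
  rw [hc0] at hjoined
  exact hjoined.symm

lemma carpet_pathConnected : IsPathConnected (carpetSet d L S) :=
  ⟨originPt d L, originPt_mem_carpet h, fun _ hy => (carpet_joined h hy).symm⟩

lemma approx_pathConnected (m : ℕ) : IsPathConnected (approxSet d L S m) := by
  have hL : 1 < L := hL1' h
  refine ⟨originPt d L, carpet_subset_approx m (originPt_mem_carpet h), ?_⟩
  intro y hy
  obtain ⟨w, hw, hyw⟩ := Set.mem_iUnion₂.mp hy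
  have hcell : wordCell d L w ⊆ approxSet d L S m := cell_subset_approx hL w hw m le_rfl
  have j1 : JoinedIn (approxSet d L S m) (cornerPt L w (fun _ => false)) y := by
    have hpc : IsPathConnected (wordCell d L w) :=
      (convex_wordCell w).isPathConnected ⟨_, cornerPt_mem_cell h w (fun _ => false)⟩
    exact (hpc.joinedIn _ (cornerPt_mem_cell h w _) y hyw).mono hcell
  have j2 : JoinedIn (approxSet d L S m) (originPt d L) (cornerPt L w (fun _ => false)) :=
    ((base_joined h w hw).symm.mono (carpet_subset_approx m)).mono (fun z hz => hz)
  exact j2.trans j1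

end koenig

section reflmaps

def updPt {d : ℕ} (x : EuclideanSpace ℝ (Fin d)) (i0 : Fin d) (t : ℝ) :
    EuclideanSpace ℝ (Fin d) := WithLp.toLp 2 (fun i => if i = i0 then t else x i)

lemma updPt_same {x : EuclideanSpace ℝ (Fin d)} {i0 : Fin d} {t : ℝ} :
    updPt x i0 t i0 = t := if_pos rfl

lemma updPt_other {x : EuclideanSpace ℝ (Fin d)} {i0 i : Fin d} {t : ℝ} (hi : i ≠ i0) :
    updPt x i0 t i = x i := if_neg hi

lemma approx_cube (hL : 1 < L) {m : ℕ} {x : EuclideanSpace ℝ (Fin d)}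
    (hx : x ∈ approxSet d L S m) : ∀ i, 0 ≤ x i ∧ x i ≤ 1 := by
  obtain ⟨w, _, hxw⟩ := Set.mem_iUnion₂.mp hx
  exact mem_cube_of_mem_wordCell hL hxw

variable (h : IsGSC d L S)
include h

lemma global_flip_mem (i0 : Fin d) {m : ℕ} {x : EuclideanSpace ℝ (Fin d)}
    (hx : x ∈ approxSet d L S m) : updPt x i0 (1 - x i0) ∈ approxSet d L S m := by
  classical
  have hL : 1 < L := hL1' h
  obtain ⟨w, hw, hxw⟩ := Set.mem_iUnion₂.mp hx
  set w' : Fin m → (Fin d → Fin L) := fun q => fun i => if i = i0 then (w q i).rev else w q i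
    with hw'def
  have hw' : ∀ q, w' q ∈ S := by
    intro q
    have := flip_mem h (fun i => decide (i = i0)) (hw q)
    convert this using 1
    funext i
    by_cases hc : i = i0 <;> simp [hw'def, hc]
  have hbase_other : ∀ i, i ≠ i0 → wbase L w' i = wbase L w i := by
    intro i hi
    unfold wbase
    apply Finset.sum_congr rfl
    intro q _
    rw [hw'def]
    simp [hi]
  have hbase0 : wbase L w' i0 + wbase L w i0 = 1 - 1/(L:ℝ)^m := by
    unfold wbase
    rw [← Finset.sum_add_distrib, ← sum_geom hL m]
    apply Finset.sum_congr rfl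
    intro q _
    rw [← add_div]
    congr 1
    have : w' q i0 = (w q i0).rev := by rw [hw'def]; simp
    rw [this, Fin.val_rev]
    have hvlt : (w q i0 : ℕ) < L := (w q i0).isLt
    push_cast [Nat.cast_sub (by omega : (w q i0 : ℕ) + 1 ≤ L)]
    ring
  refine mem_approxSet_of hw' ?_
  rw [mem_wordCell_iff]
  intro i
  by_cases hi : i = i0
  · subst hi
    obtain ⟨h1, h2⟩ := mem_wordCell_iff.mp hxw i
    rw [updPt_same]
    constructor <;> linarith
  · rw [updPt_other hi, hbase_other i hi]
    exact mem_wordCell_iff.mp hxw i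

lemma refl_lo_mem {j : ℕ} (hj : 1 ≤ j) (i0 : Fin d) {m : ℕ} {x : EuclideanSpace ℝ (Fin d)}
    (hx : x ∈ approxSet d L S m) (hxi : x i0 ≤ 1/(L:ℝ)^j/2) :
    updPt x i0 (1/(L:ℝ)^j - x i0) ∈ approxSet d L S m := by
  classical
  have hL : 1 < L := hL1' h
  have hLR : (1:ℝ) < (L:ℝ) := by exact_mod_cast hL
  have hcj : (0:ℝ) < 1/(L:ℝ)^j := by positivity
  obtain ⟨w, hw, hxw⟩ := Set.mem_iUnion₂.mp hx
  have hx0 : 0 ≤ x i0 := le_trans (wbase_nonneg w i0) (mem_wordCell_iff.mp hxw i0).1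
  have hdig : ∀ q : Fin m, (q:ℕ) < j → ((w q i0 : ℕ) = 0) := by
    intro q hq
    by_contra hne
    have h1 : (1:ℝ)/(L:ℝ)^((q:ℕ)+1) ≤ (w q i0 : ℝ)/(L:ℝ)^((q:ℕ)+1) := by
      gcongr
      exact_mod_cast Nat.one_le_iff_ne_zero.mpr hne
    have h2 : (w q i0 : ℝ)/(L:ℝ)^((q:ℕ)+1) ≤ wbase L w i0 := by
      apply Finset.single_le_sum (f := fun p : Fin m => (w p i0 : ℝ)/(L:ℝ)^((p:ℕ)+1))
        (fun p _ => by positivity) (Finset.mem_univ q)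
    have h3 : 1/(L:ℝ)^j ≤ 1/(L:ℝ)^((q:ℕ)+1) := by
      gcongr
      · exact le_of_lt hLR
      · omega
    have h4 : wbase L w i0 ≤ x i0 := (mem_wordCell_iff.mp hxw i0).1
    linarith
  rcases le_or_gt m j with hmj | hmj
  · -- the word is unchanged; all digits of coordinate i0 vanish
    refine mem_approxSet_of hw ?_
    rw [mem_wordCell_iff]
    intro i
    by_cases hi : i = i0
    · subst hi
      have hb0 : wbase L w i = 0 := by
        unfold wbase
        apply Finset.sum_eq_zero
        intro q _
        rw [hdig q (lt_of_lt_of_le q.isLt hmj)]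
        simp
      have hmle : 1/(L:ℝ)^j ≤ 1/(L:ℝ)^m := by
        gcongr <;> first | exact le_of_lt hLR | omega
      rw [updPt_same, hb0]
      constructor <;> linarith
    · rw [updPt_other hi]
      exact mem_wordCell_iff.mp hxw i
  · -- m > j : reflect digits at levels ≥ j
    set w' : Fin m → (Fin d → Fin L) :=
      fun q => fun i => if i = i0 ∧ j ≤ (q:ℕ) then (w q i).rev else w q i with hw'def
    have hw' : ∀ q, w' q ∈ S := by
      intro q
      have := flip_mem h (fun i => decide (i = i0 ∧ j ≤ (q:ℕ))) (hw q)
      convert this using 1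
      funext i
      by_cases hc : (i = i0 ∧ j ≤ (q:ℕ)) <;> simp [hw'def, hc]
    have hbase_other : ∀ i, i ≠ i0 → wbase L w' i = wbase L w i := by
      intro i hi
      unfold wbase
      apply Finset.sum_congr rfl
      intro q _
      rw [hw'def]
      simp only []
      rw [if_neg (fun hc => hi hc.1)]
    have hbase0 : wbase L w' i0 + wbase L w i0 = 1/(L:ℝ)^j - 1/(L:ℝ)^m := by
      unfold wbase
      rw [← Finset.sum_add_distrib]
      have hterm : ∀ q : Fin m, (w' q i0 : ℝ)/(L:ℝ)^((q:ℕ)+1) + (w q i0 : ℝ)/(L:ℝ)^((q:ℕ)+1)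
          = if j ≤ (q:ℕ) then ((L:ℝ)-1)/(L:ℝ)^((q:ℕ)+1) else 0 := by
        intro q
        by_cases hq : j ≤ (q:ℕ)
        · rw [if_pos hq]
          have he : w' q i0 = (w q i0).rev := by rw [hw'def]; simp [hq]
          rw [he, ← add_div]
          congr 1
          rw [Fin.val_rev]
          have hvlt : (w q i0 : ℕ) < L := (w q i0).isLt
          push_cast [Nat.cast_sub (by omega : (w q i0 : ℕ) + 1 ≤ L)]
          ring
        · rw [if_neg hq]
          have h0 : (w q i0 : ℕ) = 0 := hdig q (by omega)
          have he : w' q i0 = w q i0 := by rw [hw'def]; simp [hq]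
          rw [he, h0]
          simp
      rw [Finset.sum_congr rfl (fun q _ => hterm q), sum_geom_tail hL j m,
        min_eq_left (by omega : j ≤ m)]
    refine mem_approxSet_of hw' ?_
    rw [mem_wordCell_iff]
    intro i
    by_cases hi : i = i0
    · subst hi
      obtain ⟨h1, h2⟩ := mem_wordCell_iff.mp hxw i
      rw [updPt_same]
      constructor <;> linarith
    · rw [updPt_other hi, hbase_other i hi]
      exact mem_wordCell_iff.mp hxw i

lemma refl_hi_mem {j : ℕ} (hj : 1 ≤ j) (i0 : Fin d) {m : ℕ} {x : EuclideanSpace ℝ (Fin d)}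
    (hx : x ∈ approxSet d L S m) (hxi : 1 - 1/(L:ℝ)^j/2 ≤ x i0) :
    updPt x i0 (2 - 1/(L:ℝ)^j - x i0) ∈ approxSet d L S m := by
  have h1 := global_flip_mem h i0 hx
  have h2 := refl_lo_mem h hj i0 h1 (by rw [updPt_same]; linarith)
  have h3 := global_flip_mem h i0 h2
  have heq : updPt (updPt (updPt x i0 (1 - x i0)) i0
        (1/(L:ℝ)^j - (updPt x i0 (1 - x i0)) i0)) i0
        (1 - (updPt (updPt x i0 (1 - x i0)) i0
          (1/(L:ℝ)^j - (updPt x i0 (1 - x i0)) i0)) i0)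
      = updPt x i0 (2 - 1/(L:ℝ)^j - x i0) := by
    ext i
    by_cases hi : i = i0
    · subst hi
      rw [updPt_same, updPt_same, updPt_same, updPt_same]
      ring
    · rw [updPt_other hi, updPt_other hi, updPt_other hi, updPt_other hi]
  rwa [heq] at h3

end reflmaps

section psi

open Classical in
/-- lower reflection adjustment -/
def loA (I : Set (Fin d × Bool)) (c : ℝ) (i : Fin d) (t : ℝ) : ℝ :=
  if (i, false) ∈ I then max t (c - t) else t

open Classical in
/-- upper reflection adjustment -/
def hiA (I : Set (Fin d × Bool)) (c : ℝ) (i : Fin d) (t : ℝ) : ℝ :=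
  if (i, true) ∈ I then min t (2 - c - t) else t

/-- the full folding map -/
def psiMap (I : Set (Fin d × Bool)) (c : ℝ) :
    EuclideanSpace ℝ (Fin d) → EuclideanSpace ℝ (Fin d) :=
  fun x => WithLp.toLp 2 (fun i => hiA I c i (loA I c i (x i)))

open Classical in
def psiT (I : Set (Fin d × Bool)) (c : ℝ) (T : Finset (Fin d)) (x : EuclideanSpace ℝ (Fin d)) :
    EuclideanSpace ℝ (Fin d) :=
  WithLp.toLp 2 (fun i => if i ∈ T then hiA I c i (loA I c i (x i)) else x i)

lemma psi_continuous (I : Set (Fin d × Bool)) (c : ℝ) : Continuous (psiMap I c) := by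
  have h1 : Continuous (fun v : Fin d → ℝ => fun i => hiA I c i (loA I c i (v i))) := by
    apply continuous_pi
    intro i
    have hlo : Continuous (fun t : ℝ => loA I c i t) := by
      unfold loA
      split_ifs
      · exact continuous_id.max (continuous_const.sub continuous_id)
      · exact continuous_id
    have hhi : Continuous (fun t : ℝ => hiA I c i t) := by
      unfold hiA
      split_ifs
      · exact continuous_id.min (continuous_const.sub continuous_id)
      · exact continuous_id
    exact (hhi.comp hlo).comp (continuous_apply i)
  exact (PiLp.continuous_toLp 2 (fun _ : Fin d => ℝ)).comp
    (h1.comp (PiLp.continuous_ofLp 2 (fun _ : Fin d => ℝ)))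

variable (h : IsGSC d L S)
include h

lemma c_facts {j : ℕ} (hj : 1 ≤ j) : (0:ℝ) < 1/(L:ℝ)^j ∧ 1/(L:ℝ)^j ≤ 1/3 := by
  have hL3 : (3:ℝ) ≤ (L:ℝ) := by exact_mod_cast h.hL
  constructor
  · positivity
  · have : (3:ℝ) ≤ (L:ℝ)^j := by
      calc (3:ℝ) ≤ (L:ℝ) := hL3
        _ = (L:ℝ)^1 := (pow_one _).symm
        _ ≤ (L:ℝ)^j := by
          apply pow_le_pow_right₀ (by linarith) hj
    rw [div_le_div_iff₀ (by positivity) (by norm_num : (0:ℝ) < 3)]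
    linarith

lemma psiT_mem {j : ℕ} (hj : 1 ≤ j) (I : Set (Fin d × Bool)) (T : Finset (Fin d)) {m : ℕ}
    {x : EuclideanSpace ℝ (Fin d)} (hx : x ∈ approxSet d L S m) :
    psiT I (1/(L:ℝ)^j) T x ∈ approxSet d L S m := by
  classical
  obtain ⟨hc0, hc3⟩ := c_facts h hj
  set c : ℝ := 1/(L:ℝ)^j with hcdef
  induction T using Finset.induction with
  | empty =>
    have : psiT I c ∅ x = x := by ext i; simp [psiT]
    rwa [this]
  | @insert i0 T hi0T ih =>
    have hcube := approx_cube (hL1' h) hx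
    have hx00 : 0 ≤ x i0 := (hcube i0).1
    have hx01 : x i0 ≤ 1 := (hcube i0).2
    have heq : psiT I c (insert i0 T) x
        = updPt (psiT I c T x) i0 (hiA I c i0 (loA I c i0 (x i0))) := by
      ext i
      by_cases hii : i = i0
      · subst hii
        simp [psiT, updPt]
      · simp [psiT, updPt, hii]
    have hTx_i0 : (psiT I c T x) i0 = x i0 := by simp [psiT, hi0T]
    rw [heq]
    by_cases hA : ((i0, false) ∈ I ∧ x i0 ≤ c/2)
    · have hlo : loA I c i0 (x i0) = c - x i0 := by
        unfold loA
        rw [if_pos hA.1]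
        exact max_eq_right (by linarith [hA.2])
      have hhi : hiA I c i0 (c - x i0) = c - x i0 := by
        unfold hiA
        split_ifs with hI
        · exact min_eq_left (by linarith [hA.2])
        · rfl
      rw [hlo, hhi, ← hTx_i0]
      exact refl_lo_mem h hj i0 ih (by rw [hTx_i0]; exact hA.2)
    · by_cases hB : ((i0, true) ∈ I ∧ 1 - c/2 ≤ x i0)
      · have hlo : loA I c i0 (x i0) = x i0 := by
          unfold loA
          split_ifs with hI
          · exact max_eq_left (by linarith [hB.2])
          · rfl
        have hhi : hiA I c i0 (x i0) = 2 - c - x i0 := by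
          unfold hiA
          rw [if_pos hB.1]
          exact min_eq_right (by linarith [hB.2])
        rw [hlo, hhi, ← hTx_i0]
        exact refl_hi_mem h hj i0 ih (by rw [hTx_i0]; exact hB.2)
      · have hnA : (i0, false) ∈ I → c/2 < x i0 := by
          intro hI
          by_contra hc
          exact hA ⟨hI, by linarith⟩
        have hnB : (i0, true) ∈ I → x i0 < 1 - c/2 := by
          intro hI
          by_contra hc
          exact hB ⟨hI, by linarith⟩
        have hlo : loA I c i0 (x i0) = x i0 := by
          unfold loA
          split_ifs with hI
          · exact max_eq_left (by linarith [hnA hI])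
          · rfl
        have hhi : hiA I c i0 (x i0) = x i0 := by
          unfold hiA
          split_ifs with hI
          · exact min_eq_left (by linarith [hnB hI])
          · rfl
        rw [hlo, hhi]
        have hfix : updPt (psiT I c T x) i0 (x i0) = psiT I c T x := by
          ext i
          by_cases hii : i = i0
          · subst hii
            rw [updPt_same, hTx_i0]
          · rw [updPt_other hii]
        rw [hfix]
        exact ih

lemma psi_mem_approx {j : ℕ} (hj : 1 ≤ j) (I : Set (Fin d × Bool)) {m : ℕ}
    {x : EuclideanSpace ℝ (Fin d)} (hx : x ∈ approxSet d L S m) :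
    psiMap I (1/(L:ℝ)^j) x ∈ approxSet d L S m := by
  classical
  have : psiMap I (1/(L:ℝ)^j) x = psiT I (1/(L:ℝ)^j) Finset.univ x :=
    by ext i; simp [psiMap, psiT]
  rw [this]
  exact psiT_mem h hj I Finset.univ hx

lemma psi_mem_carpet {j : ℕ} (hj : 1 ≤ j) (I : Set (Fin d × Bool))
    {x : EuclideanSpace ℝ (Fin d)} (hx : x ∈ carpetSet d L S) :
    psiMap I (1/(L:ℝ)^j) x ∈ carpetSet d L S := by
  unfold carpetSet at hx ⊢
  rw [Set.mem_iInter] at hx ⊢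
  exact fun m => psi_mem_approx h hj I (hx m)

end psi

section psibounds

lemma psi_bounds {I : Set (Fin d × Bool)} {c : ℝ} (hc0 : 0 < c) (hc3 : c ≤ 1/3)
    {x : EuclideanSpace ℝ (Fin d)} (hx : ∀ i, 0 ≤ x i ∧ x i ≤ 1) (i : Fin d) :
    (0 ≤ psiMap I c x i ∧ psiMap I c x i ≤ 1) ∧
    ((i, false) ∈ I → c/2 ≤ psiMap I c x i) ∧
    ((i, true) ∈ I → psiMap I c x i ≤ 1 - c/2) := by
  classical
  obtain ⟨hx0, hx1⟩ := hx i
  set t1 := loA I c i (x i) with ht1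
  have ht1b : 0 ≤ t1 ∧ t1 ≤ 1 := by
    rw [ht1]; unfold loA
    split_ifs
    · constructor
      · exact le_trans hx0 (le_max_left _ _)
      · exact max_le hx1 (by linarith)
    · exact ⟨hx0, hx1⟩
  have ht1lo : (i, false) ∈ I → c/2 ≤ t1 := by
    intro hI
    rw [ht1]; unfold loA
    rw [if_pos hI]
    rcases le_or_gt (c/2) (x i) with hcase | hcase
    · exact le_trans hcase (le_max_left _ _)
    · exact le_trans (by linarith) (le_max_right _ _)
  have hval : psiMap I c x i = hiA I c i t1 := rfl
  rw [hval]; unfold hiA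
  split_ifs with hI
  · refine ⟨⟨le_min ht1b.1 (by linarith [ht1b.2]), le_trans (min_le_left _ _) ht1b.2⟩, ?_, ?_⟩
    · intro hIf
      have := ht1lo hIf
      exact le_min this (by linarith [ht1b.2])
    · intro _
      rcases le_or_gt t1 (1 - c/2) with hcase | hcase
      · exact le_trans (min_le_left _ _) hcase
      · exact le_trans (min_le_right _ _) (by linarith)
  · exact ⟨ht1b, ht1lo, fun hI' => absurd hI' hI⟩

lemma psi_fix {I : Set (Fin d × Bool)} {c : ℝ}
    {x : EuclideanSpace ℝ (Fin d)}
    (hfl : ∀ i, ((i, false) ∈ I → c/2 ≤ x i) ∧ ((i, true) ∈ I → x i ≤ 1 - c/2)) :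
    psiMap I c x = x := by
  classical
  ext i
  have hval : psiMap I c x i = hiA I c i (loA I c i (x i)) := rfl
  rw [hval]
  have hlo : loA I c i (x i) = x i := by
    unfold loA
    split_ifs with hI
    · exact max_eq_left (by linarith [(hfl i).1 hI])
    · rfl
  rw [hlo]
  unfold hiA
  split_ifs with hI
  · exact min_eq_left (by linarith [(hfl i).2 hI])
  · rfl

lemma dist_coord_le (x y : EuclideanSpace ℝ (Fin d)) (i : Fin d) :
    dist (x i) (y i) ≤ dist x y := by
  rw [EuclideanSpace.dist_eq]
  have h1 : dist (x i) (y i) = √((dist (x i) (y i))^2) :=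
    (Real.sqrt_sq dist_nonneg).symm
  rw [h1]
  apply Real.sqrt_le_sqrt
  exact Finset.single_le_sum (f := fun i => dist (x i) (y i)^2)
    (fun p _ => sq_nonneg _) (Finset.mem_univ i)

lemma cubeFace_nonempty (hd : 0 < d) (p : Fin d × Bool) : (cubeFace d p).Nonempty := by
  refine ⟨WithLp.toLp 2 (fun _ => if p.2 then (1:ℝ) else 0 : Fin d → ℝ), ⟨fun i => ?_, rfl⟩⟩
  split_ifs <;> norm_num

lemma infDist_ge_of_coord (hd : 0 < d) {x : EuclideanSpace ℝ (Fin d)} (p : Fin d × Bool) (r : ℝ)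
    (hcoord : r ≤ |x p.1 - (if p.2 then 1 else 0)|) : r ≤ infDist x (cubeFace d p) := by
  by_contra hc
  push_neg at hc
  obtain ⟨y, hy, hdist⟩ := (infDist_lt_iff (cubeFace_nonempty hd p)).mp hc
  have h1 : dist (x p.1) (y p.1) ≤ dist x y := dist_coord_le x y p.1
  rw [Real.dist_eq, hy.2] at h1
  linarith

lemma infDist_lt_of_coord {x : EuclideanSpace ℝ (Fin d)}
    (hx : ∀ i, 0 ≤ x i ∧ x i ≤ 1) (p : Fin d × Bool) (r : ℝ)
    (hcoord : |x p.1 - (if p.2 then 1 else 0)| < r) : infDist x (cubeFace d p) < r := by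
  classical
  set z := updPt x p.1 (if p.2 then (1:ℝ) else 0) with hz
  have hzF : z ∈ cubeFace d p := by
    constructor
    · intro i
      by_cases hi : i = p.1
      · subst hi
        rw [hz, updPt_same]
        split_ifs <;> norm_num
      · rw [hz, updPt_other hi]
        exact hx i
    · rw [hz, updPt_same]
  have hdist : dist x z = |x p.1 - (if p.2 then 1 else 0)| := by
    rw [EuclideanSpace.dist_eq]
    rw [Finset.sum_eq_single p.1 ?_ ?_]
    · rw [hz, updPt_same, Real.dist_eq, Real.sqrt_sq_eq_abs]
      exact abs_abs _
    · intro b _ hb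
      rw [hz, updPt_other hb, dist_self]
      norm_num
    · intro hb
      exact absurd (Finset.mem_univ p.1) hb
  calc infDist x (cubeFace d p) ≤ dist x z := infDist_le_dist_of_mem hzF
    _ < r := by rw [hdist]; exact hcoord

end psibounds

section final

variable (h : IsGSC d L S)
include h

lemma main_aux {j : ℕ} (hj : 1 ≤ j) (I : Set (Fin d × Bool))
    (G : Set (EuclideanSpace ℝ (Fin d))) (hG : IsPathConnected G)
    (hGcube : ∀ x ∈ G, ∀ i, 0 ≤ x i ∧ x i ≤ 1)
    (hGpsi : ∀ x ∈ G, psiMap I (1/(L:ℝ)^j) x ∈ G) :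
    IsPathConnected
      (G \ ⋃ p ∈ I, {x ∈ G | infDist x (cubeFace d p) < 1 / (2 * (L : ℝ) ^ j)}) := by
  classical
  obtain ⟨hc0, hc3⟩ := c_facts h hj
  set c : ℝ := 1/(L:ℝ)^j with hcdef
  have hr : c/2 = 1 / (2 * (L:ℝ)^j) := by
    rw [hcdef, div_div, mul_comm]
  have hKeq : G \ ⋃ p ∈ I, {x ∈ G | infDist x (cubeFace d p) < 1 / (2 * (L : ℝ) ^ j)}
      = psiMap I c '' G := by
    ext x
    constructor
    · rintro ⟨hxG, hxU⟩
      have hcube := hGcube x hxG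
      have hcnd : ∀ i : Fin d, ((i, false) ∈ I → c/2 ≤ x i) ∧ ((i, true) ∈ I → x i ≤ 1 - c/2) := by
        intro i
        constructor
        · intro hI
          by_contra hcon
          push_neg at hcon
          apply hxU
          refine Set.mem_biUnion hI ⟨hxG, ?_⟩
          rw [← hr]
          apply infDist_lt_of_coord hcube (i, false)
          have h2 : (if ((i, false) : Fin d × Bool).2 = true then (1:ℝ) else 0) = 0 := by norm_num
          rw [h2, sub_zero, abs_of_nonneg (hcube i).1]
          exact hcon
        · intro hI
          by_contra hcon
          push_neg at hcon
          apply hxU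
          refine Set.mem_biUnion hI ⟨hxG, ?_⟩
          rw [← hr]
          apply infDist_lt_of_coord hcube (i, true)
          have h2 : (if ((i, true) : Fin d × Bool).2 = true then (1:ℝ) else 0) = 1 := by norm_num
          rw [h2, abs_sub_comm, abs_of_nonneg (by linarith [(hcube i).2])]
          linarith
      exact ⟨x, hxG, psi_fix hcnd⟩
    · rintro ⟨y, hyG, rfl⟩
      have hycube := hGcube y hyG
      refine ⟨hGpsi y hyG, ?_⟩
      intro hmem
      rw [Set.mem_iUnion₂] at hmem
      obtain ⟨p, hpI, hpG, hplt⟩ := hmem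
      obtain ⟨i, s⟩ := p
      have hb := psi_bounds (I := I) hc0 hc3 hycube i
      rw [← hr] at hplt
      cases s with
      | false =>
        have hge : c/2 ≤ infDist (psiMap I c y) (cubeFace d (i, false)) := by
          apply infDist_ge_of_coord (hd0 h) (i, false)
          have h2 : (if ((i, false) : Fin d × Bool).2 = true then (1:ℝ) else 0) = 0 := by norm_num
          rw [h2, sub_zero, abs_of_nonneg (hb.1).1]
          exact hb.2.1 hpI
        linarith
      | true =>
        have hge : c/2 ≤ infDist (psiMap I c y) (cubeFace d (i, true)) := by
          apply infDist_ge_of_coord (hd0 h) (i, true)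
          have h2 : (if ((i, true) : Fin d × Bool).2 = true then (1:ℝ) else 0) = 1 := by norm_num
          rw [h2, abs_sub_comm, abs_of_nonneg (by linarith [(hb.1).2])]
          linarith [hb.2.2 hpI]
        linarith
  rw [hKeq]
  exact hG.image (psi_continuous I c)

end final

end CarpetAux


open CarpetAux in
/-- Let `F` be a generalized Sierpiński carpet and `F_m` its level-`m`
approximation domains. For `j ≥ 1` and a set `I` of index pairs `(i,s)`, removing from
`F` (resp. `F_m`) the open `L^{-j}/2`-neighborhoods of the faces `∂_{i,s}F₀`, `(i,s) ∈ I`,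
leaves a path-connected set. -/
theorem carpet_minus_face_neighborhoods_pathConnected
    (d L : ℕ) (S : Set (Fin d → Fin L)) (h : IsGSC d L S)
    (j : ℕ) (hj : 1 ≤ j) (I : Set (Fin d × Bool)) :
    IsPathConnected
      (carpetSet d L S \
        ⋃ p ∈ I, {x ∈ carpetSet d L S |
          Metric.infDist x (cubeFace d p) < 1 / (2 * (L : ℝ) ^ j)}) ∧
    ∀ m : ℕ, IsPathConnected
      (approxSet d L S m \
        ⋃ p ∈ I, {x ∈ approxSet d L S m |
          Metric.infDist x (cubeFace d p) < 1 / (2 * (L : ℝ) ^ j)}) := by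
  constructor
  · apply main_aux h hj I _ (carpet_pathConnected h)
    · intro x hx
      exact approx_cube (hL1' h) (carpet_subset_approx 0 hx)
    · intro x hx
      exact psi_mem_carpet h hj I hx
  · intro m
    apply main_aux h hj I _ (approx_pathConnected h m)
    · intro x hx
      exact approx_cube (hL1' h) hx
    · intro x hx
      exact psi_mem_approx h hj I hx

end
end
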